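/- arXiv:1409.1329 — 15 statements merged into one kernel-verified Lean document; each statement's English description precedes it below -/
import Mathlib

section
/- Let (A, α) be a unital Kreĭn C*-algebra with fundamental symmetry α. Then the odd part A₋ = {x ∈ A : α(x) = −x} is a norm-closed subspace of A with A₊·A₋ ⊆ A₋ and A₋·A₊ ⊆ A₋, and for all x, y, z ∈ A₋: (i) x^†·y ∈ A₊ and x·y^† ∈ A₊; (ii) x^†·x is a positive element of the C*-algebra (A, †), i.e. it is fixed by † and its spectrum is contained in the nonnegative reals; (iii) x^†·x = 0 implies x = 0; (iv) ‖x‖² = ‖x^†·x‖; (v) the imprimitivity identity (x·y^†)·z = x·(y^†·z) holds. Hence A₋ is a unital Hilbert C*-bimodule over the C*-algebra A₊ with inner products ⟨x|y⟩_{A₊} = x^†·y and _{A₊}⟨x|y⟩ = x·y^†. -/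
/-- Type synonym used to endow `A` with the C*-involution `x ↦ star (α x)`. -/
def KreinWrap (A : Type*) : Type _ := A

/-- Put an element of `A` into the wrapper. -/
def KreinWrap.mk {A : Type*} (a : A) : KreinWrap A := a

/-- Extract an element of `A` from the wrapper. -/
def KreinWrap.out {A : Type*} (a : KreinWrap A) : A := a

set_option maxHeartbeats 1000000 in
private theorem krein_aux {A : Type*} [NormedRing A] [NormedAlgebra ℂ A]
    [StarRing A] [StarModule ℂ A] [CompleteSpace A] (α : A → A)
    (hadd : ∀ x y : A, α (x + y) = α x + α y)
    (hsmul : ∀ (c : ℂ) (x : A), α (c • x) = c • α x)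
    (hmul : ∀ x y : A, α (x * y) = α x * α y)
    (hstar : ∀ x : A, α (star x) = star (α x))
    (hinvol : ∀ x : A, α (α x) = x)
    (hfs : ∀ x : A, ‖α (star x) * x‖ = ‖x‖ ^ 2) :
    (∀ x : A, ‖α x‖ = ‖x‖) ∧
    (∀ x : A, ∀ z ∈ spectrum ℂ (star (α x) * x), 0 ≤ z.re ∧ z.im = 0) := by
  have hInv : ∀ x : A, star (α (star (α x))) = x := fun x => by
    rw [hstar, hinvol, star_star]
  have hMul : ∀ x y : A, star (α (x * y)) = star (α y) * star (α x) := fun x y => by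
    rw [hmul, star_mul]
  have hAdd : ∀ x y : A, star (α (x + y)) = star (α x) + star (α y) := fun x y => by
    rw [hadd, star_add]
  have hSmul : ∀ (c : ℂ) (x : A), star (α (c • x)) = star c • star (α x) := fun c x => by
    rw [hsmul, star_smul]
  have hCs : ∀ x : A, ‖x‖ * ‖x‖ ≤ ‖star (α x) * x‖ := fun x => by
    rw [← hstar, hfs, sq]
  have hMs : ∀ x : A, α (star (α x)) = star (α (α x)) := fun x => hstar (α x)
  letI i1 : NormedRing (KreinWrap A) := inferInstanceAs (NormedRing A)
  letI i2 : NormedAlgebra ℂ (KreinWrap A) := ‹NormedAlgebra ℂ A›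
  letI i3 : CompleteSpace (KreinWrap A) := inferInstanceAs (CompleteSpace A)
  letI i4 : StarRing (KreinWrap A) :=
    { star := fun x => KreinWrap.mk (star (α x.out))
      star_involutive := by exact hInv
      star_mul := by exact hMul
      star_add := by exact hAdd }
  letI i5 : StarModule ℂ (KreinWrap A) := ⟨by exact hSmul⟩
  letI i6 : CStarRing (KreinWrap A) := ⟨by exact hCs⟩
  letI i7 : CStarAlgebra (KreinWrap A) := { i1, i4, i3, i6, i2, i5 with }
  let e : KreinWrap A ≃⋆ₐ[ℂ] KreinWrap A :=
    { toFun := α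
      invFun := α
      left_inv := hinvol
      right_inv := hinvol
      map_mul' := hmul
      map_add' := hadd
      map_smul' := hsmul
      map_star' := by exact hMs }
  constructor
  · exact fun x => StarAlgEquiv.norm_map e (KreinWrap.mk x)
  · intro x z hz
    have hz' : z ∈ spectrum ℂ (star (KreinWrap.mk x) * KreinWrap.mk x) := by exact hz
    have hsa : IsSelfAdjoint (star (KreinWrap.mk x) * KreinWrap.mk x) :=
      IsSelfAdjoint.star_mul_self (KreinWrap.mk x)
    have hre : z = z.re := hsa.mem_spectrum_eq_re hz'
    refine ⟨?_, by rw [hre]; exact Complex.ofReal_im z.re⟩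
    have h1 : (z.re : ℂ) ∈ spectrum ℂ (star (KreinWrap.mk x) * KreinWrap.mk x) := hre ▸ hz'
    have h2 : z.re ∈ spectrum ℝ (star (KreinWrap.mk x) * KreinWrap.mk x) := by
      apply spectrum.of_algebraMap_mem ℂ
      simpa using h1
    exact spectrum_star_mul_self_nonneg z.re h2
/-- The odd part `A₋ = {x | α x = -x}` of a unital Kreĭn C*-algebra is a
norm-closed subspace, a bimodule over the even part, and with the inner products
`⟨x|y⟩ = x† * y`, `⟨x|y⟩' = x * y†` (where `x† = star (α x)`) it is a unital Hilbert
C*-bimodule over `A₊` satisfying the imprimitivity-type associativity identity. -/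
theorem krein_odd_part_is_hilbert_bimodule {A : Type*} [NormedRing A] [NormedAlgebra ℂ A]
    [StarRing A] [StarModule ℂ A] [CompleteSpace A]
(α : A → A)
    (hadd : ∀ x y : A, α (x + y) = α x + α y)
    (hsmul : ∀ (c : ℂ) (x : A), α (c • x) = c • α x)
    (hmul : ∀ x y : A, α (x * y) = α x * α y)
    (hstar : ∀ x : A, α (star x) = star (α x))
    (hinvol : ∀ x : A, α (α x) = x)
    (hfs : ∀ x : A, ‖α (star x) * x‖ = ‖x‖ ^ 2) :
    IsClosed {x : A | α x = -x} ∧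
    (∀ x y : A, α x = -x → α y = -y → α (x + y) = -(x + y)) ∧
    (∀ (c : ℂ) (x : A), α x = -x → α (c • x) = -(c • x)) ∧
    (∀ a x : A, α a = a → α x = -x → α (a * x) = -(a * x) ∧ α (x * a) = -(x * a)) ∧
    (∀ x y : A, α x = -x → α y = -y →
      α (star (α x) * y) = star (α x) * y ∧ α (x * star (α y)) = x * star (α y)) ∧
    (∀ x : A, α x = -x → star (α (star (α x) * x)) = star (α x) * x ∧
      ∀ z ∈ spectrum ℂ (star (α x) * x), 0 ≤ z.re ∧ z.im = 0) ∧
    (∀ x : A, α x = -x → star (α x) * x = 0 → x = 0) ∧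
    (∀ x : A, α x = -x → ‖x‖ ^ 2 = ‖star (α x) * x‖) ∧
    (∀ x y z : A, α x = -x → α y = -y → α z = -z →
      (x * star (α y)) * z = x * (star (α y) * z)) := by
  obtain ⟨hiso, hspec⟩ := krein_aux α hadd hsmul hmul hstar hinvol hfs
  have key1 : ∀ x : A, α (star (α x)) = star x := fun x => by rw [hstar, hinvol]
  have hcs : ∀ x : A, ‖star (α x) * x‖ = ‖x‖ ^ 2 := fun x => by rw [← hstar, hfs]
  have hcont : Continuous α := by
    apply AddMonoidHomClass.continuous_of_bound (AddMonoidHom.mk' α hadd) 1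
    intro x
    show ‖α x‖ ≤ 1 * ‖x‖
    rw [hiso, one_mul]
  refine ⟨?_, ?_, ?_, ?_, ?_, ?_, ?_, ?_, ?_⟩
  · exact isClosed_eq hcont continuous_neg
  · intro x y hx hy
    rw [hadd, hx, hy, neg_add]
  · intro c x hx
    rw [hsmul, hx, smul_neg]
  · intro a x ha hx
    constructor
    · rw [hmul, ha, hx, mul_neg]
    · rw [hmul, ha, hx, neg_mul]
  · intro x y hx hy
    constructor
    · rw [hmul, key1, hy, hx, star_neg, mul_neg, neg_mul]
    · rw [hmul, hx, key1, hy, star_neg, neg_mul, mul_neg]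
  · intro x _
    refine ⟨?_, hspec x⟩
    rw [hmul, key1, star_mul, star_star]
  · intro x _ h
    have h0 : ‖x‖ ^ 2 = 0 := by rw [← hcs x, h, norm_zero]
    exact norm_eq_zero.mp (pow_eq_zero_iff (two_ne_zero) |>.mp h0)
  · intro x _
    exact (hcs x).symm
  · intro x y z _ _ _
    exact mul_assoc _ _ _
end

section
/- Let (A, α) be a rank-one Kreĭn C*-algebra with fundamental symmetry α, i.e. the even part A₊ and the odd part A₋ are both one-dimensional complex vector spaces. Then A is commutative. -/
/-- A rank-one Kreĭn C*-algebra (both the even part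
`A₊ = {x | α x = x}` and the odd part `A₋ = {x | α x = -x}` are one-dimensional complex
vector spaces) is commutative. -/
theorem krein_rank_one_commutative {A : Type*} [NonUnitalNormedRing A] [NormedSpace ℂ A]
    [IsScalarTower ℂ A A] [SMulCommClass ℂ A A] [StarRing A] [StarModule ℂ A] [CompleteSpace A]
(α : A → A)
    (hadd : ∀ x y : A, α (x + y) = α x + α y)
    (hsmul : ∀ (c : ℂ) (x : A), α (c • x) = c • α x)
    (hmul : ∀ x y : A, α (x * y) = α x * α y)
    (hstar : ∀ x : A, α (star x) = star (α x))
    (hinvol : ∀ x : A, α (α x) = x)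
    (hfs : ∀ x : A, ‖α (star x) * x‖ = ‖x‖ ^ 2)
    (hplus : ∃ p : A, α p = p ∧ p ≠ 0 ∧ ∀ x : A, α x = x → ∃ c : ℂ, x = c • p)
    (hminus : ∃ q : A, α q = -q ∧ q ≠ 0 ∧ ∀ x : A, α x = -x → ∃ c : ℂ, x = c • q) :
    ∀ x y : A, x * y = y * x := by
  obtain ⟨p, hp1, hp0, hpspan⟩ := hplus
  obtain ⟨q, hq1, hq0, hqspan⟩ := hminus
  have hneg : ∀ x : A, α (-x) = -α x := by
    intro x
    have := hsmul (-1) x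
    simpa using this
  have hcancel : ∀ (v : A), v ≠ 0 → ∀ a b : ℂ, a • v = b • v → a = b := by
    intro v hv a b h
    have h2 : (a - b) • v = 0 := by rw [sub_smul, h, sub_self]
    rcases smul_eq_zero.mp h2 with h' | h'
    · exact sub_eq_zero.mp h'
    · exact absurd h' hv
  -- q*q is even
  obtain ⟨h, hh⟩ := hpspan (q * q) (by rw [hmul, hq1, neg_mul_neg])
  -- star q is odd
  obtain ⟨s, hs⟩ := hqspan (star q) (by rw [hstar, hq1, star_neg])
  -- q*q ≠ 0
  have hqq : q * q ≠ 0 := by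
    intro hz
    have := hfs q
    rw [hs, hsmul, hq1, smul_neg, neg_mul, smul_mul_assoc, hz, smul_zero, neg_zero,
      norm_zero] at this
    exact hq0 (norm_eq_zero.mp (pow_eq_zero_iff (n := 2) (by norm_num) |>.mp this.symm))
  have hhne : h ≠ 0 := by
    intro hz
    rw [hz, zero_smul] at hh
    exact hqq hh
  -- p*p is even, p*q and q*p are odd
  obtain ⟨g, hg⟩ := hpspan (p * p) (by rw [hmul, hp1])
  obtain ⟨e, he⟩ := hqspan (p * q) (by rw [hmul, hp1, hq1, mul_neg])
  obtain ⟨f, hf⟩ := hqspan (q * p) (by rw [hmul, hp1, hq1, neg_mul])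
  -- associativity relations
  have rel1 : e * h = h * g := by
    have := mul_assoc p q q
    rw [he, hh, smul_mul_assoc, hh, mul_smul_comm, hg, smul_smul, smul_smul] at this
    exact hcancel p hp0 _ _ this
  have rel2 : h * g = f * h := by
    have := mul_assoc q q p
    rw [hh, hf, smul_mul_assoc, hg, mul_smul_comm, hh, smul_smul, smul_smul] at this
    exact hcancel p hp0 _ _ this
  have hef : e = f := by
    have : e * h = f * h := by rw [rel1, rel2]
    exact mul_right_cancel₀ hhne this
  have hpq : p * q = q * p := by rw [he, hf, hef]
  intro x y
  -- decompose x and y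
  obtain ⟨a, ha⟩ := hpspan ((2⁻¹ : ℂ) • (x + α x))
    (by rw [hsmul, hadd, hinvol, add_comm])
  obtain ⟨b, hb⟩ := hqspan ((2⁻¹ : ℂ) • (x - α x))
    (by rw [hsmul, sub_eq_add_neg, hadd, hneg, hinvol, ← smul_neg, neg_add, neg_neg,
      ← sub_eq_neg_add, sub_eq_add_neg])
  obtain ⟨c, hc⟩ := hpspan ((2⁻¹ : ℂ) • (y + α y))
    (by rw [hsmul, hadd, hinvol, add_comm])
  obtain ⟨d, hd⟩ := hqspan ((2⁻¹ : ℂ) • (y - α y))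
    (by rw [hsmul, sub_eq_add_neg, hadd, hneg, hinvol, ← smul_neg, neg_add, neg_neg,
      ← sub_eq_neg_add, sub_eq_add_neg])
  have hx : x = a • p + b • q := by
    rw [← ha, ← hb]; module
  have hy : y = c • p + d • q := by
    rw [← hc, ← hd]; module
  rw [hx, hy]
  simp only [add_mul, mul_add, smul_mul_assoc, mul_smul_comm, hpq]
  module
end

section
/- Let (A, α) be a Kreĭn C*-algebra with fundamental symmetry α and let ε : A → A be an odd symmetry compatible with α. Then ε is isometric: ‖ε(x)‖ = ‖x‖ for all x ∈ A. -/
/-- An odd symmetry `ε` compatible with the fundamental symmetry `α` of a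
Kreĭn C*-algebra is isometric. -/
theorem krein_odd_symmetry_isometric {A : Type*} [NonUnitalNormedRing A] [NormedSpace ℂ A]
    [IsScalarTower ℂ A A] [SMulCommClass ℂ A A] [StarRing A] [StarModule ℂ A] [CompleteSpace A]
(α : A → A)
    (hadd : ∀ x y : A, α (x + y) = α x + α y)
    (hsmul : ∀ (c : ℂ) (x : A), α (c • x) = c • α x)
    (hmul : ∀ x y : A, α (x * y) = α x * α y)
    (hstar : ∀ x : A, α (star x) = star (α x))
    (hinvol : ∀ x : A, α (α x) = x)
    (hfs : ∀ x : A, ‖α (star x) * x‖ = ‖x‖ ^ 2)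
    (ε : A → A)
    (headd : ∀ x y : A, ε (x + y) = ε x + ε y)
    (hesmul : ∀ (c : ℂ) (x : A), ε (c • x) = c • ε x)
    (heinvol : ∀ x : A, ε (ε x) = x)
    (hestar : ∀ x : A, ε (star x) = -star (ε x))
    (hemul_l : ∀ x y : A, ε (x * y) = ε x * y)
    (hemul_r : ∀ x y : A, ε (x * y) = x * ε y)
    (hecompat : ∀ x : A, ε (α x) = -α (ε x)) :
    ∀ x : A, ‖ε x‖ = ‖x‖ := by
  intro x
  have hneg : ∀ y : A, α (-y) = -α y := by
    intro y
    have := hsmul (-1 : ℂ) y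
    simpa using this
  have hstar_eps : star (ε x) = -ε (star x) := by
    have := hestar x
    rw [this, neg_neg]
  have key : α (star (ε x)) * ε x = α (star x) * x := by
    have h1 : α (star (ε x)) = ε (α (star x)) := by
      rw [hstar_eps, hneg]
      have := hecompat (star x)
      -- ε (α (star x)) = -α (ε (star x)) ⇒ α (ε (star x)) = -ε (α (star x))
      rw [show α (ε (star x)) = -ε (α (star x)) by rw [this]; exact (neg_neg _).symm]
      exact neg_neg _
    rw [h1, ← hemul_l, ← hemul_r, heinvol]
  have hsq : ‖ε x‖ ^ 2 = ‖x‖ ^ 2 := by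
    rw [← hfs (ε x), key, hfs x]
  nlinarith [norm_nonneg (ε x), norm_nonneg x]
end

section
/- Let 𝕂 be the set of complex 2×2 matrices of the form T_{a,b} = [[a,b],[b,a]] (a, b ∈ ℂ), with the usual matrix addition, scalar multiplication and multiplication, the operator norm, and the involution T_{a,b}* := T_{conj(a), −conj(b)}. Then: (i) 𝕂 is closed under multiplication and the map T ↦ T* is a conjugate-linear antimultiplicative involution; (ii) the operator norm satisfies ‖T_{a,b}‖ = max(|a+b|, |a−b|); (iii) the map γ(T_{a,b}) := T_{a,−b} is a *-automorphism of 𝕂 with γ ∘ γ = id and ‖γ(T*)·T‖ = ‖T‖² for all T ∈ 𝕂, so (𝕂, γ) is a unital Kreĭn C*-algebra; (iv) the map ε_𝕂(T_{a,b}) := T_{b,a} is an odd symmetry: ε_𝕂 ∘ ε_𝕂 = id, ε_𝕂(T*) = −ε_𝕂(T)*, ε_𝕂(ST) = ε_𝕂(S)·T = S·ε_𝕂(T), and ε_𝕂 ∘ γ = −γ ∘ ε_𝕂. -/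
noncomputable section

open scoped Matrix.Norms.L2Operator

/-- Membership in the Kreĭn C*-algebra `𝕂` of matrices `T_{a,b} = !![a, b; b, a]`. -/
def Kmem (M : Matrix (Fin 2) (Fin 2) ℂ) : Prop :=
  M 0 0 = M 1 1 ∧ M 0 1 = M 1 0

/-- The matrix `T_{a,b} = !![a, b; b, a]`. -/
def Tmat (a b : ℂ) : Matrix (Fin 2) (Fin 2) ℂ := !![a, b; b, a]

/-- The involution of `𝕂`: `T_{a,b}* = T_{conj a, -conj b}`. -/
noncomputable def Kst (M : Matrix (Fin 2) (Fin 2) ℂ) : Matrix (Fin 2) (Fin 2) ℂ :=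
  Matrix.of fun i j => if i = j then starRingEnd ℂ (M i j) else -starRingEnd ℂ (M i j)

/-- The fundamental symmetry of `𝕂`: `γ (T_{a,b}) = T_{a,-b}`. -/
def Kgamma (M : Matrix (Fin 2) (Fin 2) ℂ) : Matrix (Fin 2) (Fin 2) ℂ :=
  Matrix.of fun i j => if i = j then M i j else -M i j

/-- The odd symmetry of `𝕂`: `ε (T_{a,b}) = T_{b,a}`. -/
def Keps (M : Matrix (Fin 2) (Fin 2) ℂ) : Matrix (Fin 2) (Fin 2) ℂ :=
  Matrix.of fun i j => M i (j + 1)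

open Matrix

namespace KAux

lemma fin01 : (0:Fin 2)+1 = 1 := rfl
lemma fin11 : (1:Fin 2)+1 = 0 := rfl

lemma par (u v : ℂ) : ‖u+v‖^2 + ‖u-v‖^2 = 2*(‖u‖^2+‖v‖^2) := by
  simp only [Complex.sq_norm, Complex.normSq_apply, Complex.add_re,
    Complex.add_im, Complex.sub_re, Complex.sub_im]
  ring

lemma euc_norm (v : Fin 2 → ℂ) : ‖(EuclideanSpace.equiv (Fin 2) ℂ).symm v‖
    = Real.sqrt (‖v 0‖^2 + ‖v 1‖^2) := by
  rw [EuclideanSpace.norm_eq]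
  simp [Fin.sum_univ_two]

lemma Tmat_mulVec (a b : ℂ) (v : Fin 2 → ℂ) :
    Tmat a b *ᵥ v = ![a * v 0 + b * v 1, b * v 0 + a * v 1] := by
  ext i
  fin_cases i <;> simp [Tmat, Matrix.mulVec, dotProduct, Fin.sum_univ_two]

lemma lower (a b : ℂ) (s : ℂ) (hs : s = 1 ∨ s = -1) :
    ‖a + s * b‖ ≤ ‖Tmat a b‖ := by
  have h := Matrix.l2_opNorm_mulVec (Tmat a b) ((EuclideanSpace.equiv (Fin 2) ℂ).symm ![1, s])
  have hx : ‖(EuclideanSpace.equiv (Fin 2) ℂ).symm ![(1:ℂ), s]‖ = Real.sqrt 2 := by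
    rw [euc_norm]
    rcases hs with h | h <;> norm_num [h]
  have hmv : Tmat a b *ᵥ (((EuclideanSpace.equiv (Fin 2) ℂ).symm ![(1:ℂ), s]) : Fin 2 → ℂ)
      = ![a + s * b, s * (a + s * b)] := by
    rw [show (((EuclideanSpace.equiv (Fin 2) ℂ).symm ![(1:ℂ), s]) : Fin 2 → ℂ) = ![1, s] from rfl,
      Tmat_mulVec]
    rcases hs with h | h <;> subst h <;> ext i <;> fin_cases i <;> simp <;> ring
  rw [hmv, hx, euc_norm] at h
  have hns : ‖s * (a + s * b)‖ = ‖a + s * b‖ := by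
    have h1 : ‖s‖ = 1 := by rcases hs with h | h <;> simp [h]
    rw [norm_mul, h1, one_mul]
  simp only [Matrix.cons_val_zero, Matrix.cons_val_one, Matrix.head_cons, hns] at h
  have key : Real.sqrt (‖a + s * b‖^2 + ‖a + s * b‖^2) = ‖a + s * b‖ * Real.sqrt 2 := by
    rw [show ‖a + s*b‖^2 + ‖a + s*b‖^2 = ‖a + s*b‖^2 * 2 by ring,
      Real.sqrt_mul (sq_nonneg _), Real.sqrt_sq (norm_nonneg _)]
  rw [key] at h
  have h2 : (0:ℝ) < Real.sqrt 2 := by positivity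
  exact le_of_mul_le_mul_right h h2

lemma norm_Tmat (a b : ℂ) : ‖Tmat a b‖ = max ‖a + b‖ ‖a - b‖ := by
  refine le_antisymm ?_ (max_le ?_ ?_)
  · set m := max ‖a + b‖ ‖a - b‖ with hm
    have hm0 : 0 ≤ m := le_trans (norm_nonneg _) (le_max_left _ _)
    rw [Matrix.l2_opNorm_def]
    refine ContinuousLinearMap.opNorm_le_bound _ hm0 fun x => ?_
    rw [show ((Matrix.toEuclideanLin (𝕜 := ℂ) (m := Fin 2) (n := Fin 2)).trans
        LinearMap.toContinuousLinearMap (Tmat a b)) x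
        = (EuclideanSpace.equiv (Fin 2) ℂ).symm (Tmat a b *ᵥ (WithLp.equiv _ _ x)) from rfl,
      euc_norm, Tmat_mulVec, EuclideanSpace.norm_eq]
    simp only [Matrix.cons_val_zero, Matrix.cons_val_one, Matrix.head_cons, Fin.sum_univ_two]
    set x0 : ℂ := WithLp.equiv 2 (Fin 2 → ℂ) x 0 with hx0
    set x1 : ℂ := WithLp.equiv 2 (Fin 2 → ℂ) x 1 with hx1
    have hxx0 : (x 0 : ℂ) = x0 := rfl
    have hxx1 : (x 1 : ℂ) = x1 := rfl
    rw [hxx0, hxx1]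
    have key : ‖a * x0 + b * x1‖^2 + ‖b * x0 + a * x1‖^2 ≤ m^2 * (‖x0‖^2 + ‖x1‖^2) := by
      have h1 := par (a * x0 + b * x1) (b * x0 + a * x1)
      have h2 := par x0 x1
      have e1 : (a * x0 + b * x1) + (b * x0 + a * x1) = (a + b) * (x0 + x1) := by ring
      have e2 : (a * x0 + b * x1) - (b * x0 + a * x1) = (a - b) * (x0 - x1) := by ring
      rw [e1, e2, norm_mul, norm_mul] at h1
      have b1 : ‖a + b‖ ≤ m := le_max_left _ _
      have b2 : ‖a - b‖ ≤ m := le_max_right _ _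
      nlinarith [norm_nonneg (a+b), norm_nonneg (a-b), norm_nonneg (x0+x1), norm_nonneg (x0-x1),
        sq_nonneg ‖x0+x1‖, norm_nonneg x0, norm_nonneg x1,
        mul_le_mul_of_nonneg_right (mul_le_mul b1 b1 (norm_nonneg _) hm0) (sq_nonneg ‖x0+x1‖),
        mul_le_mul_of_nonneg_right (mul_le_mul b2 b2 (norm_nonneg _) hm0) (sq_nonneg ‖x0-x1‖)]
    calc Real.sqrt (‖a * x0 + b * x1‖^2 + ‖b * x0 + a * x1‖^2)
        ≤ Real.sqrt (m^2 * (‖x0‖^2 + ‖x1‖^2)) := Real.sqrt_le_sqrt key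
      _ = m * Real.sqrt (‖x0‖^2 + ‖x1‖^2) := by
          rw [Real.sqrt_mul (sq_nonneg _), Real.sqrt_sq hm0]
  · simpa using lower a b 1 (Or.inl rfl)
  · have := lower a b (-1) (Or.inr rfl)
    simpa [sub_eq_add_neg] using this

lemma Kmem_eq (M) (hM : Kmem M) : M = Tmat (M 0 0) (M 0 1) := by
  ext i j; fin_cases i <;> fin_cases j <;> simp [Tmat, hM.1, hM.2]

lemma gprod (a b : ℂ) : Kgamma (Kst (Tmat a b)) * Tmat a b
    = Tmat (starRingEnd ℂ a * a + starRingEnd ℂ b * b)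
        (starRingEnd ℂ a * b + starRingEnd ℂ b * a) := by
  ext i j
  fin_cases i <;> fin_cases j <;>
    simp [Kgamma, Kst, Tmat, Matrix.mul_apply, Fin.sum_univ_two] <;> ring

lemma krein_norm (M) (hM : Kmem M) : ‖Kgamma (Kst M) * M‖ = ‖M‖ ^ 2 := by
  rw [Kmem_eq M hM]
  set a := M 0 0; set b := M 0 1
  rw [gprod, norm_Tmat, norm_Tmat]
  have e1 : starRingEnd ℂ a * a + starRingEnd ℂ b * b
      + (starRingEnd ℂ a * b + starRingEnd ℂ b * a) = starRingEnd ℂ (a+b) * (a+b) := by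
    simp [map_add]; ring
  have e2 : starRingEnd ℂ a * a + starRingEnd ℂ b * b
      - (starRingEnd ℂ a * b + starRingEnd ℂ b * a) = starRingEnd ℂ (a-b) * (a-b) := by
    simp [map_sub]; ring
  rw [e1, e2, norm_mul, norm_mul, RCLike.norm_conj, RCLike.norm_conj,
    ← pow_two, ← pow_two]
  rcases le_total ‖a+b‖ ‖a-b‖ with h | h
  · rw [max_eq_right h, max_eq_right (pow_le_pow_left₀ (norm_nonneg _) h 2)]
  · rw [max_eq_left h, max_eq_left (pow_le_pow_left₀ (norm_nonneg _) h 2)]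

end KAux

/-- `𝕂 = {T_{a,b} = !![a, b; b, a] | a b : ℂ}` with the operator norm,
involution `T_{a,b}* = T_{conj a, -conj b}`, fundamental symmetry `γ (T_{a,b}) = T_{a,-b}`
and odd symmetry `ε (T_{a,b}) = T_{b,a}` is a rank-one unital symmetric Kreĭn C*-algebra. -/
theorem K_is_symmetric_krein_algebra :
    -- (i) 𝕂 is closed under the algebra operations, and * is a conjugate-linear
    --     antimultiplicative involution
    (∀ M N, Kmem M → Kmem N → Kmem (M * N)) ∧
    (∀ M N, Kmem M → Kmem N → Kmem (M + N)) ∧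
    (∀ (c : ℂ) (M), Kmem M → Kmem (c • M)) ∧
    Kmem (1 : Matrix (Fin 2) (Fin 2) ℂ) ∧
    (∀ M, Kmem M → Kmem (Kst M)) ∧
    (∀ M : Matrix (Fin 2) (Fin 2) ℂ, Kst (Kst M) = M) ∧
    (∀ M N, Kmem M → Kmem N → Kst (M * N) = Kst N * Kst M) ∧
    (∀ (c : ℂ) (M N : Matrix (Fin 2) (Fin 2) ℂ),
      Kst (c • M + N) = starRingEnd ℂ c • Kst M + Kst N) ∧
    -- (ii) the operator norm
    (∀ a b : ℂ, ‖Tmat a b‖ = max ‖a + b‖ ‖a - b‖) ∧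
    -- (iii) γ is a *-automorphism and a fundamental symmetry
    (∀ M, Kmem M → Kmem (Kgamma M)) ∧
    (∀ M N : Matrix (Fin 2) (Fin 2) ℂ, Kgamma (M + N) = Kgamma M + Kgamma N) ∧
    (∀ (c : ℂ) (M : Matrix (Fin 2) (Fin 2) ℂ), Kgamma (c • M) = c • Kgamma M) ∧
    (∀ M N, Kmem M → Kmem N → Kgamma (M * N) = Kgamma M * Kgamma N) ∧
    Kgamma (1 : Matrix (Fin 2) (Fin 2) ℂ) = 1 ∧
    (∀ M : Matrix (Fin 2) (Fin 2) ℂ, Kgamma (Kst M) = Kst (Kgamma M)) ∧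
    (∀ M : Matrix (Fin 2) (Fin 2) ℂ, Kgamma (Kgamma M) = M) ∧
    (∀ M, Kmem M → ‖Kgamma (Kst M) * M‖ = ‖M‖ ^ 2) ∧
    -- (iv) ε is an odd symmetry
    (∀ M, Kmem M → Kmem (Keps M)) ∧
    (∀ M : Matrix (Fin 2) (Fin 2) ℂ, Keps (Keps M) = M) ∧
    (∀ M, Kmem M → Keps (Kst M) = -Kst (Keps M)) ∧
    (∀ M N, Kmem M → Kmem N → Keps (M * N) = Keps M * N ∧ Keps (M * N) = M * Keps N) ∧
    (∀ M, Kmem M → Keps (Kgamma M) = -Kgamma (Keps M)) := by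
  refine ⟨?_, ?_, ?_, ?_, ?_, ?_, ?_, ?_, ?_, ?_, ?_, ?_, ?_, ?_, ?_, ?_, ?_, ?_, ?_, ?_, ?_, ?_⟩
  · intro M N hM hN
    obtain ⟨h1, h2⟩ := hM; obtain ⟨h3, h4⟩ := hN
    constructor <;> simp only [Matrix.mul_apply, Fin.sum_univ_two, h1, h2, h3, h4] <;> ring
  · intro M N hM hN
    obtain ⟨h1, h2⟩ := hM; obtain ⟨h3, h4⟩ := hN
    constructor <;> simp [h1, h2, h3, h4]
  · intro c M hM
    obtain ⟨h1, h2⟩ := hM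
    constructor <;> simp [h1, h2]
  · constructor <;> simp [Matrix.one_apply]
  · intro M hM
    obtain ⟨h1, h2⟩ := hM
    constructor <;> simp [Kst, h1, h2]
  · intro M
    ext i j
    by_cases h : i = j <;> simp [Kst, h]
  · intro M N hM hN
    obtain ⟨h1, h2⟩ := hM; obtain ⟨h3, h4⟩ := hN
    ext i j
    fin_cases i <;> fin_cases j <;>
      simp [Kst, Matrix.mul_apply, Fin.sum_univ_two, h1, h2, h3, h4, map_add,
        _root_.map_mul] <;> ring
  · intro c M N
    ext i j
    by_cases h : i = j <;> simp [Kst, h, map_add, _root_.map_mul, mul_comm] <;> ring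
  · exact KAux.norm_Tmat
  · intro M hM
    obtain ⟨h1, h2⟩ := hM
    constructor <;> simp [Kgamma, h1, h2]
  · intro M N
    ext i j; by_cases h : i = j <;> simp [Kgamma, h] <;> ring
  · intro c M
    ext i j; by_cases h : i = j <;> simp [Kgamma, h]
  · intro M N hM hN
    obtain ⟨h1, h2⟩ := hM; obtain ⟨h3, h4⟩ := hN
    ext i j
    fin_cases i <;> fin_cases j <;>
      simp [Kgamma, Matrix.mul_apply, Fin.sum_univ_two, h1, h2, h3, h4] <;> ring
  · ext i j; by_cases h : i = j <;> simp [Kgamma, Matrix.one_apply, h]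
  · intro M
    ext i j; by_cases h : i = j <;> simp [Kgamma, Kst, h]
  · intro M
    ext i j; by_cases h : i = j <;> simp [Kgamma, h]
  · exact KAux.krein_norm
  · intro M hM
    obtain ⟨h1, h2⟩ := hM
    constructor <;> simp [Keps, KAux.fin01, KAux.fin11, h1, h2]
  · intro M
    ext i j
    fin_cases j <;> simp [Keps, KAux.fin01, KAux.fin11]
  · intro M hM
    obtain ⟨h1, h2⟩ := hM
    ext i j
    fin_cases i <;> fin_cases j <;> simp [Keps, Kst, KAux.fin01, KAux.fin11, h1, h2]
  · intro M N hM hN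
    obtain ⟨h1, h2⟩ := hM; obtain ⟨h3, h4⟩ := hN
    constructor <;> ext i j <;> fin_cases i <;> fin_cases j <;>
      simp [Keps, Matrix.mul_apply, Fin.sum_univ_two, KAux.fin01, KAux.fin11,
        h1, h2, h3, h4] <;> ring
  · intro M hM
    obtain ⟨h1, h2⟩ := hM
    ext i j
    fin_cases i <;> fin_cases j <;> simp [Keps, Kgamma, KAux.fin01, KAux.fin11, h1, h2]
end
end

section
/- Let φ : 𝕂 → 𝕂 be a unital ℂ-linear multiplicative map satisfying φ(T*) = φ(T)* for all T ∈ 𝕂. Then φ is either the identity map or the map γ. In particular, γ is the unique fundamental symmetry on 𝕂. -/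
noncomputable section

open scoped Matrix.Norms.L2Operator

lemma Kmem_E : Kmem (Tmat 0 1) := by simp [Kmem, Tmat]

lemma Kmem_one : Kmem 1 := by simp [Kmem, Matrix.one_apply]

lemma Kmem_smul (c : ℂ) {M} (h : Kmem M) : Kmem (c • M) :=
  ⟨by simp [h.1], by simp [h.2]⟩

lemma Kmem_Kst {M} (h : Kmem M) : Kmem (Kst M) := by
  constructor <;> simp [Kst, h.1, h.2]

lemma Tsmul (a b : ℂ) :
    a • (1 : Matrix (Fin 2) (Fin 2) ℂ) + b • Tmat 0 1 = Tmat a b := by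
  ext i j
  fin_cases i <;> fin_cases j <;> simp [Tmat, Matrix.one_apply]

lemma Kdecomp {M : Matrix (Fin 2) (Fin 2) ℂ} (h : Kmem M) :
    M = M 0 0 • (1 : Matrix (Fin 2) (Fin 2) ℂ) + M 0 1 • Tmat 0 1 := by
  ext i j
  fin_cases i <;> fin_cases j <;>
    simp [Tmat, Matrix.one_apply, ← h.1, ← h.2]

lemma EmulE : Tmat 0 1 * Tmat 0 1 = (1 : Matrix (Fin 2) (Fin 2) ℂ) := by
  ext i j
  fin_cases i <;> fin_cases j <;>
    simp [Tmat, Matrix.mul_apply, Fin.sum_univ_two, Matrix.one_apply]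

lemma KstE : Kst (Tmat 0 1) = (-1 : ℂ) • Tmat 0 1 := by
  ext i j
  fin_cases i <;> fin_cases j <;> simp [Kst, Tmat]

lemma KmemT (a b : ℂ) : Kmem (Tmat a b) := by simp [Kmem, Tmat]

lemma KstT (a b : ℂ) : Kst (Tmat a b) = Tmat (starRingEnd ℂ a) (-(starRingEnd ℂ b)) := by
  ext i j
  fin_cases i <;> fin_cases j <;> simp [Kst, Tmat]

lemma TmulT (a b c d : ℂ) : Tmat a b * Tmat c d = Tmat (a*c + b*d) (a*d + b*c) := by
  ext i j
  fin_cases i <;> fin_cases j <;>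
    simp [Tmat, Matrix.mul_apply, Fin.sum_univ_two] <;> ring

/-- Every unital *-endomorphism of `𝕂` is either the identity or `γ`;
in particular `γ` is the unique fundamental symmetry of `𝕂`. -/
theorem K_endomorphisms_are_id_or_gamma
    (φ : Matrix (Fin 2) (Fin 2) ℂ → Matrix (Fin 2) (Fin 2) ℂ)
    (hmem : ∀ M, Kmem M → Kmem (φ M))
    (hadd : ∀ M N, Kmem M → Kmem N → φ (M + N) = φ M + φ N)
    (hsmul : ∀ (c : ℂ) (M), Kmem M → φ (c • M) = c • φ M)
    (hmul : ∀ M N, Kmem M → Kmem N → φ (M * N) = φ M * φ N)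
    (hone : φ 1 = 1)
    (hstar : ∀ M, Kmem M → φ (Kst M) = Kst (φ M)) :
    ((∀ M, Kmem M → φ M = M) ∨ (∀ M, Kmem M → φ M = Kgamma M)) ∧
    ((∀ M, Kmem M → φ (φ M) = M) →
      (∀ M, Kmem M → ‖φ (Kst M) * M‖ = ‖M‖ ^ 2) →
      ∀ M, Kmem M → φ M = Kgamma M) := by
  have hKE : Kmem (Tmat 0 1) := Kmem_E
  have hKφE : Kmem (φ (Tmat 0 1)) := hmem _ hKE
  set x := φ (Tmat 0 1) 0 0 with hxdef
  set y := φ (Tmat 0 1) 0 1 with hydef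
  have hφE : φ (Tmat 0 1) = Tmat x y := (Kdecomp hKφE).trans (Tsmul x y)
  have hsq : Tmat x y * Tmat x y = 1 := by
    rw [← hφE, ← hmul _ _ hKE hKE, EmulE, hone]
  rw [TmulT] at hsq
  have e1 : x*x + y*y = 1 := by
    have := congrFun (congrFun hsq 0) 0
    simpa [Tmat, Matrix.one_apply] using this
  have e2 : x*y + y*x = 0 := by
    have := congrFun (congrFun hsq 0) 1
    simpa [Tmat, Matrix.one_apply] using this
  have h1 : (-1 : ℂ) • Tmat x y = Tmat (starRingEnd ℂ x) (-(starRingEnd ℂ y)) := by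
    rw [← KstT, ← hφE, ← hstar _ hKE, KstE, hsmul _ _ hKE, hφE]
  have e3 : starRingEnd ℂ x = -x := by
    have := congrFun (congrFun h1 0) 0
    simpa [Tmat] using this.symm
  have hxre : x.re = 0 := by
    have := congrArg Complex.re e3
    simp at this
    linarith
  have hx0 : x = 0 := by
    by_contra hx
    have hy0 : y = 0 := by
      have hxy : x * y = 0 := by
        have h2 : (2:ℂ) * (x * y) = 0 := by linear_combination e2
        simpa using h2
      rcases mul_eq_zero.mp hxy with h | h
      · exact absurd h hx
      · exact h
    rw [hy0] at e1
    simp at e1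
    have := congrArg Complex.re e1
    simp [Complex.mul_re, hxre] at this
    nlinarith [sq_nonneg x.im]
  rw [hx0] at e1
  simp at e1
  have hy : y = 1 ∨ y = -1 := by
    have h0 : (y - 1) * (y + 1) = 0 := by linear_combination e1
    rcases mul_eq_zero.mp h0 with h | h
    · left; linear_combination h
    · right; linear_combination h
  have hexpand : ∀ M, Kmem M → φ M = M 0 0 • 1 + M 0 1 • Tmat x y := by
    intro M hM
    have hd := Kdecomp hM
    calc φ M = φ (M 0 0 • 1 + M 0 1 • Tmat 0 1) := by rw [← hd]
      _ = M 0 0 • φ 1 + M 0 1 • φ (Tmat 0 1) := by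
          rw [hadd _ _ (Kmem_smul _ Kmem_one) (Kmem_smul _ hKE),
              hsmul _ _ Kmem_one, hsmul _ _ hKE]
      _ = M 0 0 • 1 + M 0 1 • Tmat x y := by rw [hone, hφE]
  have main : (∀ M, Kmem M → φ M = M) ∨ (∀ M, Kmem M → φ M = Kgamma M) := by
    rcases hy with hy | hy
    · left
      intro M hM
      rw [hexpand M hM, hx0, hy, ← Kdecomp hM]
    · right
      intro M hM
      rw [hexpand M hM, hx0, hy]
      ext i j
      fin_cases i <;> fin_cases j <;>
        simp [Kgamma, Tmat, Matrix.one_apply, ← hM.1, ← hM.2]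
  refine ⟨main, ?_⟩
  intro _ hnorm
  rcases main with hid | hg
  · intro M hM
    exfalso
    have hT : Kmem (Tmat 1 1) := KmemT 1 1
    have h := hnorm (Tmat 1 1) hT
    have hk : Kst (Tmat 1 1) = Tmat 1 (-1) := by rw [KstT]; norm_num
    rw [hid _ (Kmem_Kst hT), hk, TmulT] at h
    norm_num at h
    have hz : Tmat (0:ℂ) 0 = 0 := by
      ext i j; fin_cases i <;> fin_cases j <;> simp [Tmat]
    rw [hz, norm_zero] at h
    have h2 : ‖Tmat (1:ℂ) 1‖ = 0 :=
      pow_eq_zero_iff (n := 2) (by norm_num) |>.mp h.symm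
    have h3 : Tmat (1:ℂ) 1 = 0 := norm_eq_zero.mp h2
    have := congrFun (congrFun h3 0) 1
    simp [Tmat] at this
  · exact hg
end
end

section
/- Let (A, α) be a rank-one unital Kreĭn C*-algebra with fundamental symmetry α, i.e. dim_ℂ A₊ = dim_ℂ A₋ = 1. Then A₊ = ℂ·1, and there exists e ∈ A₋ with ‖e‖ = 1, e·e = 1 and e* = −e, such that the map 𝕂 → A sending T_{m,n} ↦ m·1 + n·e (m, n ∈ ℂ) is a bijective unital ℂ-algebra homomorphism that preserves the involutions and is isometric. Hence every rank-one unital Kreĭn C*-algebra is isomorphic to 𝕂. -/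
noncomputable section

open scoped Matrix.Norms.L2Operator

private lemma aux_sq_eq_one {r : ℝ} (hr : 0 ≤ r) (h : r ^ 2 = 1) : r = 1 := by
  rw [← Real.sqrt_sq hr, h, Real.sqrt_one]

private lemma aux_idem_norm {r : ℝ} (h : r = r ^ 2) (h0 : r ≠ 0) : r = 1 := by
  have h2 : r * r = r * 1 := by nlinarith [h]
  exact mul_left_cancel₀ h0 h2

private lemma aux_pow_le {r M : ℝ} (hr : 0 ≤ r) (hM : 0 ≤ M)
    (h : ∀ k : ℕ, r ^ (2^(k+1)) ≤ 2 * M ^ (2^(k+1))) : r ≤ M := by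
  by_contra hlt
  push_neg at hlt
  rcases eq_or_lt_of_le hM with hM0 | hMpos
  · have h0 := h 0
    rw [← hM0] at h0
    norm_num at h0
    nlinarith [hlt, h0]
  · have hq : 1 < r / M := (one_lt_div hMpos).2 hlt
    obtain ⟨n, hn⟩ := pow_unbounded_of_one_lt (2:ℝ) hq
    have hnle : n ≤ 2^(n+1) :=
      le_trans (Nat.lt_two_pow_self (n := n)).le (Nat.pow_le_pow_right (by norm_num) (Nat.le_succ n))
    have hmono : (r/M)^n ≤ (r/M)^(2^(n+1)) := pow_le_pow_right₀ hq.le hnle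
    have hbd : (r/M)^(2^(n+1)) ≤ 2 := by
      rw [div_pow, div_le_iff₀ (by positivity)]
      calc r ^ 2^(n+1) ≤ 2 * M ^ (2^(n+1)) := h n
      _ = 2 * M ^ 2^(n+1) := by ring
    linarith

open Matrix in
private lemma Tmat_lower (a b : ℂ) (s : ℂ) (z : ℂ) (hz : ‖z‖ = 1)
    (hmv : Tmat a b *ᵥ ![1, z] = s • ![1, z]) : ‖s‖ ≤ ‖Tmat a b‖ := by
  set f := Matrix.toEuclideanCLM (n := Fin 2) (𝕜 := ℂ) (Tmat a b)
  set v : EuclideanSpace ℂ (Fin 2) := (WithLp.equiv 2 (Fin 2 → ℂ)).symm ![1, z] with hv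
  have happ : f v = (WithLp.equiv 2 (Fin 2 → ℂ)).symm (Tmat a b *ᵥ ![1, z]) :=
    rfl
  have hnv : ‖v‖ = Real.sqrt 2 := by
    rw [hv, EuclideanSpace.norm_eq, Fin.sum_univ_two]
    have c0 : ((WithLp.equiv 2 (Fin 2 → ℂ)).symm ![(1:ℂ), z]) 0 = 1 := rfl
    have c1 : ((WithLp.equiv 2 (Fin 2 → ℂ)).symm ![(1:ℂ), z]) 1 = z := rfl
    rw [c0, c1, hz]
    norm_num
  have hnfv : ‖f v‖ = ‖s‖ * Real.sqrt 2 := by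
    rw [happ, hmv, EuclideanSpace.norm_eq, Fin.sum_univ_two]
    have c0 : ((WithLp.equiv 2 (Fin 2 → ℂ)).symm (s • ![(1:ℂ), z])) 0 = s * 1 := rfl
    have c1 : ((WithLp.equiv 2 (Fin 2 → ℂ)).symm (s • ![(1:ℂ), z])) 1 = s * z := rfl
    rw [c0, c1, norm_mul, norm_mul, hz, norm_one]
    rw [show (‖s‖*1)^2 + (‖s‖*1)^2 = ‖s‖^2*2 by ring]
    rw [Real.sqrt_mul (sq_nonneg _), Real.sqrt_sq (norm_nonneg _)]
  have hle := f.le_opNorm v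
  rw [hnfv, hnv] at hle
  have h2 : (0:ℝ) < Real.sqrt 2 := by positivity
  exact le_of_mul_le_mul_right hle h2

open Matrix in
private lemma Tmat_norm (a b : ℂ) : ‖Tmat a b‖ = max ‖a+b‖ ‖a-b‖ := by
  apply le_antisymm
  · rw [Matrix.cstar_norm_def]
    apply ContinuousLinearMap.opNorm_le_bound _ (le_trans (norm_nonneg _) (le_max_left _ _))
    intro v
    set w := Matrix.toEuclideanCLM (n := Fin 2) (𝕜 := ℂ) (Tmat a b) v with hw
    have hcoord : ∀ i, w i = (Tmat a b *ᵥ (WithLp.equiv 2 (Fin 2 → ℂ) v)) i := by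
      intro i
      rw [hw]
      have := Matrix.ofLp_toEuclideanCLM (Tmat a b) v
      exact congrFun this i
    have h0 : w 0 = a * v 0 + b * v 1 := by
      rw [hcoord 0]; simp [Tmat, Matrix.mulVec, dotProduct, Fin.sum_univ_two]
    have h1 : w 1 = b * v 0 + a * v 1 := by
      rw [hcoord 1]; simp [Tmat, Matrix.mulVec, dotProduct, Fin.sum_univ_two]
    set K := max ‖a+b‖ ‖a-b‖ with hK
    have hKnn : 0 ≤ K := le_trans (norm_nonneg _) (le_max_left _ _)
    have hwsq : ‖w‖^2 = ‖w 0‖^2 + ‖w 1‖^2 := by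
      rw [EuclideanSpace.norm_eq, Real.sq_sqrt (by positivity), Fin.sum_univ_two]
    have hvsq : ‖v‖^2 = ‖v 0‖^2 + ‖v 1‖^2 := by
      rw [EuclideanSpace.norm_eq, Real.sq_sqrt (by positivity), Fin.sum_univ_two]
    have par : ∀ u z : ℂ, ‖u+z‖^2 + ‖u-z‖^2 = 2*(‖u‖^2+‖z‖^2) := by
      intro u z; have := parallelogram_law_with_norm ℝ u z; nlinarith [this]
    have key : ‖w 0‖^2 + ‖w 1‖^2 ≤ K^2 * (‖v 0‖^2 + ‖v 1‖^2) := by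
      have e1 : (a * v 0 + b * v 1) + (b * v 0 + a * v 1) = (a+b) * (v 0 + v 1) := by ring
      have e2 : (a * v 0 + b * v 1) - (b * v 0 + a * v 1) = (a-b) * (v 0 - v 1) := by ring
      have hp := par (a * v 0 + b * v 1) (b * v 0 + a * v 1)
      rw [e1, e2] at hp
      have hq := par (v 0) (v 1)
      have hab : ‖(a+b)*(v 0 + v 1)‖^2 = ‖a+b‖^2 * ‖v 0 + v 1‖^2 := by
        rw [norm_mul]; ring
      have hab2 : ‖(a-b)*(v 0 - v 1)‖^2 = ‖a-b‖^2 * ‖v 0 - v 1‖^2 := by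
        rw [norm_mul]; ring
      have l1 : ‖a+b‖^2 ≤ K^2 := by
        have h := le_max_left ‖a+b‖ ‖a-b‖
        nlinarith [norm_nonneg (a+b)]
      have l2 : ‖a-b‖^2 ≤ K^2 := by
        have h := le_max_right ‖a+b‖ ‖a-b‖
        nlinarith [norm_nonneg (a-b)]
      have step1 : ‖a+b‖^2 * ‖v 0 + v 1‖^2 ≤ K^2 * ‖v 0 + v 1‖^2 :=
        mul_le_mul_of_nonneg_right l1 (sq_nonneg _)
      have step2 : ‖a-b‖^2 * ‖v 0 - v 1‖^2 ≤ K^2 * ‖v 0 - v 1‖^2 :=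
        mul_le_mul_of_nonneg_right l2 (sq_nonneg _)
      have hq'' : K^2*‖v 0 + v 1‖^2 + K^2*‖v 0 - v 1‖^2 = K^2 * (2*(‖v 0‖^2+‖v 1‖^2)) := by
        rw [← mul_add, hq]
      rw [h0, h1]
      linarith [hp, hab, hab2, step1, step2, hq'']
    have hsq : ‖w‖^2 ≤ (K * ‖v‖)^2 := by
      rw [hwsq]
      calc ‖w 0‖^2 + ‖w 1‖^2 ≤ K^2 * (‖v 0‖^2 + ‖v 1‖^2) := key
      _ = (K*‖v‖)^2 := by rw [mul_pow, hvsq]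
    calc ‖w‖ = Real.sqrt (‖w‖^2) := (Real.sqrt_sq (norm_nonneg w)).symm
    _ ≤ Real.sqrt ((K*‖v‖)^2) := Real.sqrt_le_sqrt hsq
    _ = K * ‖v‖ := Real.sqrt_sq (mul_nonneg hKnn (norm_nonneg v))
  · apply max_le
    · apply Tmat_lower a b (a+b) 1 (by norm_num)
      funext i
      fin_cases i <;> simp [Tmat, Matrix.mulVec, dotProduct, Fin.sum_univ_two] <;> ring
    · apply Tmat_lower a b (a-b) (-1) (by norm_num)
      funext i
      fin_cases i <;> (simp [Tmat, Matrix.mulVec, dotProduct, Fin.sum_univ_two]; ring)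


/-- Every rank-one unital Kreĭn C*-algebra is isomorphic to `𝕂`:
`A₊ = ℂ·1` and there is `e ∈ A₋` with `‖e‖ = 1`, `e * e = 1`, `star e = -e` such that
`T_{m,n} ↦ m • 1 + n • e` is an isometric *-isomorphism from `𝕂` onto `A`. -/
theorem krein_rank_one_iso_K {A : Type*} [NormedRing A] [NormedAlgebra ℂ A]
    [StarRing A] [StarModule ℂ A] [CompleteSpace A]
(α : A → A)
    (hadd : ∀ x y : A, α (x + y) = α x + α y)
    (hsmul : ∀ (c : ℂ) (x : A), α (c • x) = c • α x)
    (hmul : ∀ x y : A, α (x * y) = α x * α y)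
    (hstar : ∀ x : A, α (star x) = star (α x))
    (hinvol : ∀ x : A, α (α x) = x)
    (hfs : ∀ x : A, ‖α (star x) * x‖ = ‖x‖ ^ 2)
    (hplus : ∃ p : A, α p = p ∧ p ≠ 0 ∧ ∀ x : A, α x = x → ∃ c : ℂ, x = c • p)
    (hminus : ∃ q : A, α q = -q ∧ q ≠ 0 ∧ ∀ x : A, α x = -x → ∃ c : ℂ, x = c • q) :
    (∀ x : A, α x = x → ∃ c : ℂ, x = c • (1 : A)) ∧
    ∃ e : A, α e = -e ∧ ‖e‖ = 1 ∧ e * e = 1 ∧ star e = -e ∧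
      -- the map F : T_{m,n} = M ↦ M 0 0 • 1 + M 0 1 • e is a homomorphism of algebras:
      (∀ M N, Kmem M → Kmem N →
        (M * N) 0 0 • (1 : A) + (M * N) 0 1 • e
          = (M 0 0 • (1 : A) + M 0 1 • e) * (N 0 0 • (1 : A) + N 0 1 • e)) ∧
      (∀ M N : Matrix (Fin 2) (Fin 2) ℂ,
        (M + N) 0 0 • (1 : A) + (M + N) 0 1 • e
          = (M 0 0 • (1 : A) + M 0 1 • e) + (N 0 0 • (1 : A) + N 0 1 • e)) ∧
      (∀ (c : ℂ) (M : Matrix (Fin 2) (Fin 2) ℂ),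
        (c • M) 0 0 • (1 : A) + (c • M) 0 1 • e = c • (M 0 0 • (1 : A) + M 0 1 • e)) ∧
      ((1 : Matrix (Fin 2) (Fin 2) ℂ) 0 0 • (1 : A)
        + (1 : Matrix (Fin 2) (Fin 2) ℂ) 0 1 • e = 1) ∧
      -- it preserves the involutions:
      (∀ M, Kmem M →
        Kst M 0 0 • (1 : A) + Kst M 0 1 • e = star (M 0 0 • (1 : A) + M 0 1 • e)) ∧
      -- it is bijective from 𝕂 onto A:
      (∀ M N, Kmem M → Kmem N →
        M 0 0 • (1 : A) + M 0 1 • e = N 0 0 • (1 : A) + N 0 1 • e → M = N) ∧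
      (∀ y : A, ∃ M, Kmem M ∧ M 0 0 • (1 : A) + M 0 1 • e = y) ∧
      -- it is isometric:
      (∀ M, Kmem M → ‖M 0 0 • (1 : A) + M 0 1 • e‖ = ‖M‖) := by
  obtain ⟨p, hp1, hp2, hp3⟩ := hplus
  obtain ⟨q, hq1, hq2, hq3⟩ := hminus
  have hα1 : α (1 : A) = 1 := by
    have h := hmul 1 (α 1)
    rw [one_mul, hinvol, mul_one] at h
    exact h.symm
  have hα0 : α (0 : A) = 0 := by
    have := hsmul 0 0
    simpa using this
  have hαneg : ∀ x : A, α (-x) = -α x := by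
    intro x
    have := hsmul (-1) x
    simpa using this
  have hαsub : ∀ x y : A, α (x - y) = α x - α y := by
    intro x y
    rw [sub_eq_add_neg, hadd, hαneg, sub_eq_add_neg]
  have h1ne : (1 : A) ≠ 0 := by
    intro h
    apply hq2
    calc q = q * 1 := (mul_one q).symm
    _ = 0 := by rw [h, mul_zero]
  have hn1 : ‖(1 : A)‖ = 1 := by
    have h := hfs 1
    rw [star_one, hα1, one_mul] at h
    exact aux_idem_norm h (norm_ne_zero_iff.mpr h1ne)
  have hsmul1 : ∀ c : ℂ, c • (1:A) = 0 → c = 0 := by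
    intro c h
    have h2 := congrArg norm h
    rw [norm_smul, hn1, norm_zero, mul_one] at h2
    exact norm_eq_zero.mp h2
  have hsmulx : ∀ (c : ℂ) (x : A), c • x = 0 → x ≠ 0 → c = 0 := by
    intro c x h hx
    have h2 := congrArg norm h
    rw [norm_smul, norm_zero] at h2
    rcases mul_eq_zero.mp h2 with h3 | h3
    · exact norm_eq_zero.mp h3
    · exact absurd (norm_eq_zero.mp h3) hx
  have hspan : ∀ x : A, α x = x → ∃ c : ℂ, x = c • (1 : A) := by
    obtain ⟨c₀, hc₀⟩ := hp3 1 hα1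
    have hc₀ne : c₀ ≠ 0 := by
      intro h
      rw [h, zero_smul] at hc₀
      exact h1ne hc₀
    intro x hx
    obtain ⟨c, hc⟩ := hp3 x hx
    refine ⟨c * c₀⁻¹, ?_⟩
    rw [hc₀, smul_smul, hc]
    congr 1
    field_simp
  have hconj_sq : ∀ z : ℂ, star z * z = ((‖z‖^2 : ℝ) : ℂ) := by
    intro z
    rw [RCLike.star_def, RCLike.conj_mul]
    norm_cast
  -- construction of e
  have hstarq : α (star q) = -(star q) := by rw [hstar, hq1, star_neg]
  obtain ⟨μ, hμ⟩ := hq3 (star q) hstarq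
  have hqq : α (q * q) = q * q := by rw [hmul, hq1, neg_mul_neg]
  obtain ⟨l, hl⟩ := hspan (q * q) hqq
  have hμ1 : star μ * μ = 1 := by
    have h := congrArg star hμ
    rw [star_star, star_smul, hμ, smul_smul] at h
    have h2 : (star μ * μ - 1) • q = 0 := by
      rw [sub_smul, one_smul, ← h, sub_self]
    exact sub_eq_zero.mp (hsmulx _ _ h2 hq2)
  have hnμ : ‖μ‖ = 1 := by
    have h := hconj_sq μ
    rw [hμ1] at h
    have h2 : ‖μ‖^2 = 1 := by exact_mod_cast h.symm
    exact aux_sq_eq_one (norm_nonneg μ) h2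
  have hq_norm : ‖l‖ = ‖q‖^2 := by
    have h := hfs q
    rw [hstarq, hμ, neg_mul, smul_mul_assoc, hl, smul_smul, norm_neg, norm_smul,
      hn1, mul_one, norm_mul, hnμ, one_mul] at h
    exact h
  have hlne : l ≠ 0 := by
    intro h0
    rw [h0, norm_zero] at hq_norm
    exact hq2 (norm_eq_zero.mp (sq_eq_zero_iff.mp hq_norm.symm))
  obtain ⟨c, hc2⟩ := IsAlgClosed.exists_pow_nat_eq (k := ℂ) l⁻¹ (n := 2) (by norm_num)
  have hcne : c ≠ 0 := by
    intro h
    have h2 : l⁻¹ = 0 := by rw [← hc2, h]; norm_num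
    exact hlne (inv_eq_zero.mp h2)
  obtain ⟨e, he⟩ : ∃ e : A, e = c • q := ⟨c • q, rfl⟩
  have hαe : α e = -e := by rw [he, hsmul, hq1, smul_neg]
  have hee : e * e = 1 := by
    rw [he, smul_mul_smul_comm, hl, smul_smul]
    rw [show c * c * l = c^2 * l by ring, hc2, inv_mul_cancel₀ hlne, one_smul]
  have hqe : q = c⁻¹ • e := by rw [he, smul_smul, inv_mul_cancel₀ hcne, one_smul]
  set ν := star c * μ * c⁻¹ with hν
  have hstare' : star e = ν • e := by
    rw [he, star_smul, hμ, smul_smul, smul_smul, hν]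
    congr 1
    rw [mul_assoc, inv_mul_cancel₀ hcne, mul_one]
  have hν2 : ν * ν = 1 := by
    have h := congrArg star hee
    rw [star_mul, star_one, hstare', smul_mul_smul_comm, hee] at h
    have h2 : (ν * ν - 1) • (1:A) = 0 := by rw [sub_smul, one_smul, h, sub_self]
    exact sub_eq_zero.mp (hsmul1 _ h2)
  have hone_ne_negone : (1:A) ≠ -1 := by
    intro h2
    have h3 : (1:A) + 1 = 0 := by nth_rewrite 2 [h2]; rw [add_neg_cancel]
    have h4 : (2:ℂ) • (1:A) = 0 := by rw [two_smul, h3]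
    have h5 := hsmul1 2 h4
    norm_num at h5
  have h1e : (1:A) + e ≠ 0 := by
    intro h
    have heq : e = -1 := by
      have := eq_neg_of_add_eq_zero_right h
      exact this
    have h2 := hαe
    rw [heq, hαneg, hα1, neg_neg] at h2
    exact hone_ne_negone (h2.symm ▸ h2.symm)
  have h1e' : (1:A) - e ≠ 0 := by
    intro h
    have heq : e = 1 := (sub_eq_zero.mp h).symm
    have h2 := hαe
    rw [heq, hα1] at h2
    exact hone_ne_negone h2
  have hstare : star e = -e := by
    rcases mul_self_eq_one_iff.mp hν2 with h | h
    · exfalso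
      rw [h, one_smul] at hstare'
      have h6 := hfs (1 + e)
      rw [star_add, star_one, hstare', hadd, hα1, hαe] at h6
      have h7 : ((1:A) + -e) * (1 + e) = 0 := by
        calc ((1:A) + -e) * (1 + e) = 1 + e - e - e * e := by noncomm_ring
        _ = 0 := by rw [hee]; abel
      rw [h7, norm_zero] at h6
      exact h1e (norm_eq_zero.mp (sq_eq_zero_iff.mp h6.symm))
    · rw [h, neg_one_smul] at hstare'
      exact hstare'
  have hne1 : ‖e‖ = 1 := by
    have h := hfs e
    rw [hstare, hαneg, hαe, neg_neg, hee, hn1] at h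
    exact aux_sq_eq_one (norm_nonneg e) h.symm
  -- multiplication rule
  have expand : ∀ x y x' y' : ℂ, (x•(1:A) + y•e) * (x'•(1:A) + y'•e)
      = (x*x' + y*y')•(1:A) + (x*y' + y*x')•e := by
    intro x y x' y'
    simp only [add_mul, mul_add, smul_mul_smul_comm, one_mul, mul_one, hee]
    simp only [add_smul]
    abel
  -- linear independence of 1, e
  have hlin : ∀ x y : ℂ, x•(1:A) + y•e = 0 → x = 0 ∧ y = 0 := by
    intro x y h
    have h2 : x•(1:A) - y•e = 0 := by
      have h3 := congrArg α h
      rw [hadd, hsmul, hsmul, hα1, hαe, hα0, smul_neg, ← sub_eq_add_neg] at h3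
      exact h3
    have hy : y • e = 0 := by
      have h4 : (2:ℂ) • (y • e) = 0 := by
        rw [two_smul]
        calc y•e + y•e = (x•(1:A) + y•e) - (x•(1:A) - y•e) := by abel
        _ = 0 := by rw [h, h2, sub_self]
      have h5 := congrArg norm h4
      rw [norm_smul, norm_zero] at h5
      have h6 : ‖y • e‖ = 0 := by
        rcases mul_eq_zero.mp h5 with h7 | h7
        · norm_num at h7
        · exact h7
      exact norm_eq_zero.mp h6
    have hx : x • (1:A) = 0 := by
      rw [hy, add_zero] at h
      exact h
    refine ⟨hsmul1 x hx, ?_⟩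
    have h7 := congrArg norm hy
    rw [norm_smul, hne1, mul_one, norm_zero] at h7
    exact norm_eq_zero.mp h7
  -- projections
  set P := (2⁻¹:ℂ)•(1:A) + (2⁻¹:ℂ)•e with hPdef
  set Q := (2⁻¹:ℂ)•(1:A) + (-2⁻¹:ℂ)•e with hQdef
  have hPP : P * P = P := by rw [hPdef, expand]; norm_num
  have hQQ : Q * Q = Q := by rw [hQdef, expand]; norm_num
  have hPQ : P * Q = 0 := by
    rw [hPdef, hQdef, expand]
    norm_num
  have hQP : Q * P = 0 := by
    rw [hPdef, hQdef, expand]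
    norm_num
  have hstarP : star P = Q := by
    rw [hPdef, hQdef]
    simp [star_add, star_smul, hstare, smul_neg, neg_smul]
  have hstarQ : star Q = P := by
    rw [hPdef, hQdef]
    simp [star_add, star_smul, hstare, smul_neg, neg_smul]
  have hαP : α P = Q := by
    rw [hPdef, hQdef, hadd, hsmul, hsmul, hα1, hαe, smul_neg, ← neg_smul]
  have hαQ : α Q = P := by
    rw [hPdef, hQdef, hadd, hsmul, hsmul, hα1, hαe, smul_neg, ← neg_smul, neg_neg]
  have h2P : (2:ℂ) • P = 1 + e := by
    rw [hPdef, smul_add, smul_smul, smul_smul]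
    norm_num
  have h2Q : (2:ℂ) • Q = 1 - e := by
    rw [hQdef, smul_add, smul_smul, smul_smul]
    norm_num [sub_eq_add_neg, neg_smul]
  have hPne : P ≠ 0 := by
    intro h
    apply h1e
    rw [← h2P, h, smul_zero]
  have hQne : Q ≠ 0 := by
    intro h
    apply h1e'
    rw [← h2Q, h, smul_zero]
  have hnP : ‖P‖ = 1 := by
    have h := hfs P
    rw [hstarP, hαQ, hPP] at h
    exact aux_idem_norm h (norm_ne_zero_iff.mpr hPne)
  have hnQ : ‖Q‖ = 1 := by
    have h := hfs Q
    rw [hstarQ, hαP, hQQ] at h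
    exact aux_idem_norm h (norm_ne_zero_iff.mpr hQne)
  have expandPQ : ∀ x y x' y' : ℂ, (x•P + y•Q) * (x'•P + y'•Q) = (x*x')•P + (y*y')•Q := by
    intro x y x' y'
    simp only [add_mul, mul_add, smul_mul_smul_comm, hPP, hQQ, hPQ, hQP, smul_zero,
      add_zero, zero_add]
  have hrepr : ∀ x y : ℂ, x•(1:A) + y•e = (x+y)•P + (x-y)•Q := by
    intro x y
    rw [hPdef, hQdef]
    module
  have hsqPQ : ∀ s t : ℂ, ‖s•P + t•Q‖^2 = ‖(star s * s)•P + (star t * t)•Q‖ := by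
    intro s t
    have h := hfs (s•P + t•Q)
    rw [star_add, star_smul, star_smul, hstarP, hstarQ, hadd, hsmul, hsmul, hαQ, hαP] at h
    rw [show star s • P + star t • Q = (star s)•P + (star t)•Q from rfl] at h
    rw [expandPQ] at h
    exact h.symm
  have hPQnorm : ∀ s t : ℂ, ‖s•P + t•Q‖ = max ‖s‖ ‖t‖ := by
    intro s t
    set x := s•P + t•Q with hx
    have hxP : x * P = s • P := by
      rw [hx, add_mul, smul_mul_assoc, hPP, smul_mul_assoc, hQP, smul_zero, add_zero]
    have hxQ : x * Q = t • Q := by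
      rw [hx, add_mul, smul_mul_assoc, hPQ, smul_mul_assoc, hQQ, smul_zero, zero_add]
    have hls : ‖s‖ ≤ ‖x‖ := by
      have h := norm_mul_le x P
      rw [hxP, norm_smul, hnP, mul_one, mul_one] at h
      exact h
    have hlt : ‖t‖ ≤ ‖x‖ := by
      have h := norm_mul_le x Q
      rw [hxQ, norm_smul, hnQ, mul_one, mul_one] at h
      exact h
    have hiter : ∀ n : ℕ, ‖x‖^(2^(n+1))
        = ‖((‖s‖^(2^(n+1)) : ℝ) : ℂ)•P + ((‖t‖^(2^(n+1)) : ℝ) : ℂ)•Q‖ := by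
      intro n
      induction n with
      | zero =>
        have h := hsqPQ s t
        rw [hconj_sq s, hconj_sq t] at h
        rw [← hx] at h
        exact h
      | succ n ih =>
        have key := hsqPQ ((‖s‖^(2^(n+1)) : ℝ) : ℂ) ((‖t‖^(2^(n+1)) : ℝ) : ℂ)
        have hstar_r : ∀ r₀ : ℝ, (star ((r₀:ℝ):ℂ)) * ((r₀:ℝ):ℂ) = ((r₀^2 : ℝ) : ℂ) := by
          intro r₀
          rw [Complex.star_def, Complex.conj_ofReal]
          push_cast
          ring
        rw [hstar_r, hstar_r] at key
        rw [pow_succ 2 (n+1), pow_mul, ih, key, ← pow_mul, ← pow_mul]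
    have hub : ‖x‖ ≤ max ‖s‖ ‖t‖ := by
      apply aux_pow_le (norm_nonneg x) (le_trans (norm_nonneg s) (le_max_left _ _))
      intro k
      rw [hiter k]
      have tri : ‖((‖s‖^(2^(k+1)) : ℝ) : ℂ)•P + ((‖t‖^(2^(k+1)) : ℝ) : ℂ)•Q‖
          ≤ ‖s‖^(2^(k+1)) + ‖t‖^(2^(k+1)) := by
        refine le_trans (norm_add_le _ _) ?_
        rw [norm_smul, norm_smul, hnP, hnQ, mul_one, mul_one,
          Complex.norm_real, Complex.norm_real,
          Real.norm_of_nonneg (by positivity), Real.norm_of_nonneg (by positivity)]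
      refine le_trans tri ?_
      have b1 : ‖s‖^(2^(k+1)) ≤ (max ‖s‖ ‖t‖)^(2^(k+1)) :=
        pow_le_pow_left₀ (norm_nonneg s) (le_max_left _ _) _
      have b2 : ‖t‖^(2^(k+1)) ≤ (max ‖s‖ ‖t‖)^(2^(k+1)) :=
        pow_le_pow_left₀ (norm_nonneg t) (le_max_right _ _) _
      linarith
    exact le_antisymm hub (max_le hls hlt)
  -- conclusion
  refine ⟨hspan, e, hαe, hne1, hee, hstare, ?_, ?_, ?_, ?_, ?_, ?_, ?_, ?_⟩
  · intro M N hM hN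
    have m00 : (M*N) 0 0 = M 0 0 * N 0 0 + M 0 1 * N 0 1 := by
      rw [Matrix.mul_apply, Fin.sum_univ_two, hN.2]
    have m01 : (M*N) 0 1 = M 0 0 * N 0 1 + M 0 1 * N 0 0 := by
      rw [Matrix.mul_apply, Fin.sum_univ_two, ← hN.1]
    rw [m00, m01, expand]
  · intro M N
    simp only [Matrix.add_apply, add_smul]
    abel
  · intro c M
    simp only [Matrix.smul_apply, smul_eq_mul, smul_add, smul_smul]
  · simp [Matrix.one_apply]
  · intro M hM
    have k0 : Kst M 0 0 = star (M 0 0) := rfl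
    have k1 : Kst M 0 1 = -star (M 0 1) := rfl
    rw [k0, k1, star_add, star_smul, star_smul, star_one, hstare, smul_neg, neg_smul]
  · intro M N hM hN heq
    have hdiff : (M 0 0 - N 0 0)•(1:A) + (M 0 1 - N 0 1)•e = 0 := by
      rw [sub_smul, sub_smul]
      calc M 0 0•(1:A) - N 0 0•(1:A) + (M 0 1•e - N 0 1•e)
          = (M 0 0•(1:A) + M 0 1•e) - (N 0 0•(1:A) + N 0 1•e) := by abel
      _ = 0 := by rw [heq, sub_self]
    obtain ⟨h00, h01⟩ := hlin _ _ hdiff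
    have e00 : M 0 0 = N 0 0 := sub_eq_zero.mp h00
    have e01 : M 0 1 = N 0 1 := sub_eq_zero.mp h01
    ext i j
    fin_cases i <;> fin_cases j
    · exact e00
    · exact e01
    · show M 1 0 = N 1 0
      rw [← hM.2, ← hN.2]
      exact e01
    · show M 1 1 = N 1 1
      rw [← hM.1, ← hN.1]
      exact e00
  · intro y
    have hy1 : α ((2⁻¹:ℂ)•(y + α y)) = (2⁻¹:ℂ)•(y + α y) := by
      rw [hsmul, hadd, hinvol, add_comm]
    obtain ⟨a, ha⟩ := hspan _ hy1
    have hy2 : α ((2⁻¹:ℂ)•(y - α y)) = -((2⁻¹:ℂ)•(y - α y)) := by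
      rw [hsmul, hαsub, hinvol, ← smul_neg, neg_sub]
    obtain ⟨d, hd⟩ := hq3 _ hy2
    refine ⟨Tmat a (d * c⁻¹), ⟨rfl, rfl⟩, ?_⟩
    show a • (1:A) + (d * c⁻¹) • e = y
    have hsum : (2⁻¹:ℂ)•(y + α y) + (2⁻¹:ℂ)•(y - α y) = y := by
      rw [← smul_add]
      rw [show (y + α y) + (y - α y) = (2:ℂ)•y by rw [two_smul]; abel]
      rw [smul_smul]
      norm_num
    have hde : d • q = (d * c⁻¹) • e := by rw [hqe, smul_smul]
    rw [← hsum, ha, hd, hde]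
  · intro M hM
    have hM' : M = Tmat (M 0 0) (M 0 1) := by
      ext i j
      fin_cases i <;> fin_cases j
      · rfl
      · rfl
      · exact hM.2.symm
      · exact hM.1.symm
    rw [hrepr (M 0 0) (M 0 1), hPQnorm]
    conv_rhs => rw [hM']
    rw [Tmat_norm]
end
end

section
/- Let M be a compact Hausdorff topological space and let (K, γ) be a unital Kreĭn C*-algebra with fundamental symmetry γ. Then the space C(M, K) of continuous functions from M to K, with pointwise operations, pointwise involution f*(x) := f(x)*, and the supremum norm ‖f‖ = sup_{x ∈ M} ‖f(x)‖, is a unital Banach *-algebra, and the map φ_C : C(M, K) → C(M, K) defined by φ_C(f) := γ ∘ f is a fundamental symmetry for it: φ_C is a *-automorphism, φ_C ∘ φ_C = id, and ‖φ_C(f*)·f‖ = ‖f‖² for all f. Hence C(M, K) is a unital Kreĭn C*-algebra. -/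
noncomputable section

/-- The map `φ_C : C(X, K) → C(X, K)`, `f ↦ γ ∘ f`, for a continuous map `γ : K → K`. -/
def PhiC {X K : Type*} [TopologicalSpace X] [TopologicalSpace K]
    (γ : K → K) (hγ : Continuous γ) : C(X, K) → C(X, K) :=
  fun f => ⟨fun x => γ (f x), hγ.comp f.continuous⟩

/-- For a compact Hausdorff space `X` and a unital Kreĭn C*-algebra `(K, γ)`,
the algebra `C(X, K)` with pointwise operations, pointwise involution and the sup-norm is a
unital Banach *-algebra, and `φ_C : f ↦ γ ∘ f` is a fundamental symmetry for it; hence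
`C(X, K)` is a unital Kreĭn C*-algebra. -/
theorem continuous_maps_into_krein_algebra
    {X : Type*} [TopologicalSpace X] [CompactSpace X] [T2Space X]
    {K : Type*} [NormedRing K] [NormedAlgebra ℂ K]
    [StarRing K] [StarModule ℂ K] [CompleteSpace K] [ContinuousStar K]
    (γ : K → K)
    (hadd : ∀ x y : K, γ (x + y) = γ x + γ y)
    (hsmul : ∀ (c : ℂ) (x : K), γ (c • x) = c • γ x)
    (hmul : ∀ x y : K, γ (x * y) = γ x * γ y)
    (hstar : ∀ x : K, γ (star x) = star (γ x))
    (hinvol : ∀ x : K, γ (γ x) = x)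
    (hfs : ∀ x : K, ‖γ (star x) * x‖ = ‖x‖ ^ 2)
    (hγc : Continuous γ) :
    -- C(X, K) is a unital Banach algebra for the sup-norm, with pointwise operations
    (∀ f : C(X, K), ‖f‖ = ⨆ x : X, ‖f x‖) ∧
    (∀ f g : C(X, K), ‖f * g‖ ≤ ‖f‖ * ‖g‖) ∧
    CompleteSpace C(X, K) ∧
    -- the involution is pointwise
    (∀ (f : C(X, K)) (x : X), (star f) x = star (f x)) ∧
    -- φ_C is a unital *-automorphism with φ_C ∘ φ_C = id ...
    (∀ f g : C(X, K), PhiC γ hγc (f * g) = PhiC γ hγc f * PhiC γ hγc g) ∧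
    (∀ f g : C(X, K), PhiC γ hγc (f + g) = PhiC γ hγc f + PhiC γ hγc g) ∧
    (∀ (c : ℂ) (f : C(X, K)), PhiC γ hγc (c • f) = c • PhiC γ hγc f) ∧
    PhiC γ hγc (1 : C(X, K)) = 1 ∧
    (∀ f : C(X, K), PhiC γ hγc (star f) = star (PhiC γ hγc f)) ∧
    (∀ f : C(X, K), PhiC γ hγc (PhiC γ hγc f) = f) ∧
    -- ... and a fundamental symmetry
    (∀ f : C(X, K), ‖PhiC γ hγc (star f) * f‖ = ‖f‖ ^ 2) := by
  refine ⟨fun f => ContinuousMap.norm_eq_iSup_norm f, fun f g => norm_mul_le f g,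
    inferInstance, fun f x => rfl, ?_, ?_, ?_, ?_, ?_, ?_, ?_⟩
  · intro f g; ext x; simp [PhiC, hmul]
  · intro f g; ext x; simp [PhiC, hadd]
  · intro c f; ext x; simp [PhiC, hsmul]
  · have h1 : γ 1 = 1 := by
      have h := hmul (γ 1) 1
      rw [mul_one, hinvol] at h
      simpa using h.symm
    ext x; simp [PhiC, h1]
  · intro f; ext x; simp [PhiC, hstar]
  · intro f; ext x; simp [PhiC, hinvol]
  · intro f
    have hpt : ∀ x : X, ‖(PhiC γ hγc (star f) * f) x‖ = ‖f x‖ ^ 2 := by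
      intro x; simpa [PhiC] using hfs (f x)
    rw [ContinuousMap.norm_eq_iSup_norm, ContinuousMap.norm_eq_iSup_norm]
    have hrw : (⨆ x : X, ‖(PhiC γ hγc (star f) * f) x‖) = ⨆ x : X, ‖f x‖ ^ 2 := by
      exact iSup_congr hpt
    rw [hrw]
    rcases isEmpty_or_nonempty X with hX | hX
    · simp [Real.iSup_of_isEmpty]
    · have hbdd : BddAbove (Set.range fun x : X => ‖f x‖ ^ 2) := by
        refine ⟨‖f‖ ^ 2, ?_⟩
        rintro r ⟨x, rfl⟩
        exact pow_le_pow_left₀ (norm_nonneg _) (f.norm_coe_le_norm x) 2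
      apply le_antisymm
      · refine ciSup_le fun x => ?_
        have h1 : ‖f x‖ ≤ ⨆ y : X, ‖f y‖ := by
          rw [← ContinuousMap.norm_eq_iSup_norm]; exact f.norm_coe_le_norm x
        exact pow_le_pow_left₀ (norm_nonneg _) h1 2
      · obtain ⟨x0, -, hx0⟩ := isCompact_univ.exists_isMaxOn Set.univ_nonempty
          (Continuous.continuousOn (by continuity : Continuous fun x : X => ‖f x‖))
        have hle : (⨆ y : X, ‖f y‖) ≤ ‖f x0‖ := ciSup_le fun y => hx0 (Set.mem_univ y)
        calc (⨆ y : X, ‖f y‖) ^ 2 ≤ ‖f x0‖ ^ 2 :=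
              pow_le_pow_left₀ (Real.iSup_nonneg fun y => norm_nonneg _) hle 2
          _ ≤ ⨆ x : X, ‖f x‖ ^ 2 := le_ciSup hbdd x0
end
end

section
/- Let (A, α) be a Kreĭn C*-algebra with fundamental symmetry α, and let I ⊆ A be a norm-closed two-sided ideal that is invariant under the involution (I* ⊆ I) and under α (α(I) ⊆ I). Then the quotient algebra A/I, equipped with the quotient norm ‖x + I‖ := inf{‖x + i‖ : i ∈ I}, the induced involution (x + I)* := x* + I, and the induced map [α](x + I) := α(x) + I, is a Kreĭn C*-algebra with fundamental symmetry [α]: A/I is a Banach algebra, the induced involution is a well-defined conjugate-linear antimultiplicative involution, [α] is a well-defined *-automorphism with [α] ∘ [α] = id, and ‖[α](ξ*)·ξ‖ = ‖ξ‖² for all ξ ∈ A/I. -/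
noncomputable section

variable {A : Type*} [NonUnitalNormedRing A] [NormedSpace ℂ A] [IsScalarTower ℂ A A]
  [SMulCommClass ℂ A A] [StarRing A] [StarModule ℂ A] [CompleteSpace A]

/-- Left multiplication by `a : A` descends to the quotient `A ⧸ I` when `I` is a left ideal. -/
def qMulPre (I : Submodule ℂ A) (hl : ∀ (a x : A), x ∈ I → a * x ∈ I) (a : A) :
    (A ⧸ I) →ₗ[ℂ] (A ⧸ I) :=
  I.mapQ I (LinearMap.mulLeft ℂ a) (fun x hx => hl a x hx)

/-- The map `a ↦ (· ↦ mk a * ·)` bundled as a linear map. -/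
def qMulLin (I : Submodule ℂ A) (hl : ∀ (a x : A), x ∈ I → a * x ∈ I)
    (η : A ⧸ I) : A →ₗ[ℂ] (A ⧸ I) where
  toFun a := qMulPre I hl a η
  map_add' a b := by
    obtain ⟨y, rfl⟩ := Submodule.Quotient.mk_surjective I η
    change Submodule.Quotient.mk ((a + b) * y)
      = Submodule.Quotient.mk (a * y) + Submodule.Quotient.mk (b * y)
    rw [add_mul, Submodule.Quotient.mk_add]
  map_smul' c a := by
    obtain ⟨y, rfl⟩ := Submodule.Quotient.mk_surjective I η
    change Submodule.Quotient.mk ((c • a) * y) = c • Submodule.Quotient.mk (a * y)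
    rw [smul_mul_assoc, Submodule.Quotient.mk_smul]

/-- The induced multiplication on the quotient of `A` by a two-sided ideal `I`. -/
def qMul (I : Submodule ℂ A) (hl : ∀ (a x : A), x ∈ I → a * x ∈ I)
    (hr : ∀ (x a : A), x ∈ I → x * a ∈ I) : (A ⧸ I) → (A ⧸ I) → (A ⧸ I) := fun ξ η =>
  I.liftQ (qMulLin I hl η)
    (by
      intro a ha
      obtain ⟨y, rfl⟩ := Submodule.Quotient.mk_surjective I η
      show qMulPre I hl a (Submodule.Quotient.mk y) = 0
      change Submodule.Quotient.mk (a * y) = 0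
      simpa [Submodule.Quotient.mk_eq_zero] using hr a y ha)
    ξ

/-- The induced involution `(x + I)* = x* + I` on the quotient, as a conjugate-linear map. -/
def qStar (I : Submodule ℂ A) (hst : ∀ x : A, x ∈ I → star x ∈ I) :
    (A ⧸ I) →ₛₗ[starRingEnd ℂ] (A ⧸ I) :=
  I.mapQ I ⟨⟨(star : A → A), star_add⟩, fun c x => star_smul c x⟩ (fun x hx => hst x hx)

/-- The induced map `[α] (x + I) = α x + I` on the quotient. -/
def qAlpha (I : Submodule ℂ A) (α : A → A)
    (hadd : ∀ x y : A, α (x + y) = α x + α y)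
    (hsmul : ∀ (c : ℂ) (x : A), α (c • x) = c • α x)
    (hαI : ∀ x : A, x ∈ I → α x ∈ I) : (A ⧸ I) →ₗ[ℂ] (A ⧸ I) :=
  I.mapQ I ⟨⟨α, hadd⟩, fun c x => hsmul c x⟩ (fun x hx => hαI x hx)

section CStarQuot
variable {B : Type*} [NonUnitalCStarAlgebra B]

lemma inr_mul_mem_aux (I : Submodule ℂ B) (hr : ∀ (x a : B), x ∈ I → x * a ∈ I)
    {b : B} (hb : b ∈ I) (p : Unitization ℂ B) :
    ∃ b' ∈ I, (b : Unitization ℂ B) * p = (b' : Unitization ℂ B) := by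
  refine ⟨p.fst • b + b * p.snd, I.add_mem (I.smul_mem _ hb) (hr _ _ hb), ?_⟩
  refine Unitization.ext ?_ ?_
  · simp
  · simp [Unitization.snd_mul]

set_option maxHeartbeats 2000000 in
lemma quot_sq_le_norm_add (I : Submodule ℂ B)
    (hl : ∀ (a x : B), x ∈ I → a * x ∈ I) (hr : ∀ (x a : B), x ∈ I → x * a ∈ I)
    (x : B) {i : B} (hi : i ∈ I) :
    ‖(Submodule.Quotient.mk x : B ⧸ I)‖ ^ 2 ≤ ‖star x * x + i‖ := by
  refine le_of_forall_pos_le_add fun ε hε => ?_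
  set P := Unitization ℂ B
  letI : PartialOrder P := CStarAlgebra.spectralOrder P
  haveI : StarOrderedRing P := CStarAlgebra.spectralOrderedRing P
  set c : ℝ := ε ^ 2 with hc_def
  have hc : 0 < c := by positivity
  set k : B := star i * i with hk_def
  have hk : k ∈ I := hl _ _ hi
  set h : P := (k : P) with hh_def
  have h_eq : h = star (i : P) * (i : P) := by
    rw [hh_def, hk_def, ← Unitization.inr_star, ← Unitization.inr_mul]
  have hh : (0 : P) ≤ h := h_eq ▸ star_mul_self_nonneg _
  have hspec : ∀ t ∈ spectrum ℝ h, 0 ≤ t := spectrum_nonneg_of_nonneg hh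
  have hne : ∀ t ∈ spectrum ℝ h, t + c ≠ 0 := fun t ht => by
    have := hspec t ht; positivity
  set f : ℝ → ℝ := fun t => t * (t + c)⁻¹ with hf_def
  have hfc : ContinuousOn f (spectrum ℝ h) :=
    continuousOn_id.mul ((continuousOn_id.add continuousOn_const).inv₀ hne)
  set u : P := cfc f h with hu_def
  have hu0 : (0 : P) ≤ u := by
    apply cfc_nonneg; intro t ht; have := hspec t ht; positivity
  have hu1 : u ≤ 1 := by
    apply cfc_le_one; intro t ht
    have := hspec t ht
    show t * (t + c)⁻¹ ≤ 1
    rw [← div_eq_mul_inv]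
    exact div_le_one_of_le₀ (by linarith) (by positivity)
  have h1u0 : (0 : P) ≤ 1 - u := sub_nonneg.2 hu1
  have h1usa : star (1 - u : P) = 1 - u := (IsSelfAdjoint.of_nonneg h1u0).star_eq
  have h1un : ‖(1 : P) - u‖ ≤ 1 :=
    (CStarAlgebra.norm_le_one_iff_of_nonneg _ h1u0).mpr (by simpa using sub_le_self (1:P) hu0)
  have hhsa : IsSelfAdjoint h := .of_nonneg hh
  -- decomposition of `u` showing it lies in (the image of) `I`
  set g : ℝ → ℝ := fun t => (t + c)⁻¹ - c⁻¹ with hg_def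
  have hgc : ContinuousOn g (spectrum ℝ h) :=
    ((continuousOn_id.add continuousOn_const).inv₀ hne).sub continuousOn_const
  have hdecomp : u = h * cfc g h + c⁻¹ • h := by
    have h1 : u = cfc (fun t : ℝ => t * g t + c⁻¹ • t) h := by
      apply cfc_congr
      intro t ht
      have h2 := hne t ht
      show t * (t + c)⁻¹ = t * ((t + c)⁻¹ - c⁻¹) + c⁻¹ • t
      rw [smul_eq_mul]
      ring
    rw [h1, cfc_add (a := h) (fun t : ℝ => t * g t) (fun t : ℝ => c⁻¹ • t)
        ((continuousOn_id' _).mul hgc) (by fun_prop),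
      cfc_mul (fun t : ℝ => t) g h (continuousOn_id' _) hgc, cfc_id' ℝ h, cfc_smul_id c⁻¹ h]
  obtain ⟨k₁, hk₁, hk₁eq⟩ := inr_mul_mem_aux I hr hk (cfc g h)
  set u₀ : B := k₁ + c⁻¹ • k with hu₀_def
  have hu₀I : u₀ ∈ I := I.add_mem hk₁ (I.smul_of_tower_mem _ hk)
  have hk₁eq' : h * cfc g h = ((k₁ : B) : P) := hk₁eq
  have hu_inr : u = (u₀ : P) := by
    rw [hdecomp, hk₁eq', hu₀_def, Unitization.inr_add, Unitization.inr_smul]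
  -- the key norm bound `‖h * (1 - u)‖ ≤ c`
  have hbound : ‖h * (1 - u)‖ ≤ c := by
    have e1 : h * (1 - u) = cfc (fun t : ℝ => t * (1 - f t)) h := by
      rw [cfc_mul (fun t : ℝ => t) (fun t : ℝ => 1 - f t) h (continuousOn_id' _)
          (continuousOn_const.sub hfc), cfc_id' ℝ h,
        cfc_sub (fun _ => (1:ℝ)) f h continuousOn_const hfc, cfc_const_one ℝ h]
    rw [e1]
    apply norm_cfc_le hc.le
    intro t ht
    have ht0 := hspec t ht
    have h2 := hne t ht
    have e2 : t * (1 - f t) = c * (t * (t + c)⁻¹) := by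
      show t * (1 - t * (t + c)⁻¹) = c * (t * (t + c)⁻¹)
      field_simp
      ring
    rw [Real.norm_eq_abs, e2, abs_of_nonneg (by positivity)]
    calc c * (t * (t + c)⁻¹) ≤ c * 1 := by
          gcongr
          rw [← div_eq_mul_inv]
          exact div_le_one_of_le₀ (by linarith) (by positivity)
      _ = c := mul_one c
  -- the main estimate
  have hmkle : ‖(Submodule.Quotient.mk x : B ⧸ I)‖ ≤ ‖x - x * u₀‖ := by
    have e3 : (Submodule.Quotient.mk x : B ⧸ I) = Submodule.Quotient.mk (x - x * u₀) := by
      rw [Submodule.Quotient.eq]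
      simpa using hl x u₀ hu₀I
    rw [e3]
    exact Submodule.Quotient.norm_mk_le I _
  have hXU : ((x - x * u₀ : B) : P) = (x : P) * (1 - u) := by
    rw [mul_sub, mul_one, hu_inr, Unitization.inr_sub, Unitization.inr_mul]
  have hnorm1 : ‖x - x * u₀‖ = ‖(x : P) * (1 - u)‖ := by
    rw [← Unitization.norm_inr (𝕜 := ℂ) (x - x * u₀), hXU]
  have hZ : star ((x : P)) * (x : P) = ((star x * x : B) : P) := by
    rw [Unitization.inr_mul, Unitization.inr_star]
  have hiZ : star ((i : P)) * (i : P) = h := by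
    rw [h_eq]
  have hsplit : (1 - u) * (star (x:P) * (x:P)) * (1 - u)
      = (1 - u) * ((star x * x + i : B) : P) * (1 - u) - (1 - u) * (i : P) * (1 - u) := by
    rw [hZ, Unitization.inr_add]
    noncomm_ring
  have hnsq : ∀ w : P, ‖w‖ ^ 2 = ‖star w * w‖ := fun w => by
    rw [CStarRing.norm_star_mul_self, sq]
  have hfive : ‖(1 - u) * ((star x * x + i : B) : P) * (1 - u)‖ ≤ ‖star x * x + i‖ := by
    calc ‖(1 - u) * ((star x * x + i : B) : P) * (1 - u)‖
        ≤ ‖(1 - u) * ((star x * x + i : B) : P)‖ * ‖(1 - u)‖ := norm_mul_le _ _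
      _ ≤ ‖(1 : P) - u‖ * ‖((star x * x + i : B) : P)‖ * ‖(1 : P) - u‖ := by
          gcongr; exact norm_mul_le _ _
      _ ≤ 1 * ‖((star x * x + i : B) : P)‖ * 1 := by
          gcongr <;> exact h1un
      _ = ‖star x * x + i‖ := by rw [one_mul, mul_one, Unitization.norm_inr]
  have hsix : ‖(1 - u) * (i : P) * (1 - u)‖ ≤ ε := by
    have e4 : ‖(i : P) * (1 - u)‖ ^ 2 ≤ c := by
      rw [hnsq, star_mul, h1usa, mul_assoc, ← mul_assoc (star ((i : P))), hiZ, ← mul_assoc]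
      calc ‖(1 - u) * h * (1 - u)‖ ≤ ‖(1:P) - u‖ * ‖h * (1 - u)‖ := by
            rw [mul_assoc]; exact norm_mul_le _ _
        _ ≤ 1 * c := by gcongr
        _ = c := one_mul c
    have e5 : ‖(i : P) * (1 - u)‖ ≤ ε := by
      have h4 : ‖(i : P) * (1 - u)‖ ^ 2 ≤ ε ^ 2 := by rw [← hc_def]; exact e4
      nlinarith [norm_nonneg ((i : P) * (1 - u))]
    calc ‖(1 - u) * (i : P) * (1 - u)‖ = ‖(1 - u) * ((i : P) * (1 - u))‖ := by rw [mul_assoc]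
      _ ≤ ‖(1:P) - u‖ * ‖(i : P) * (1 - u)‖ := norm_mul_le _ _
      _ ≤ 1 * ε := by gcongr
      _ = ε := one_mul ε
  calc ‖(Submodule.Quotient.mk x : B ⧸ I)‖ ^ 2 ≤ ‖(x : P) * (1 - u)‖ ^ 2 := by
        rw [← hnorm1]; gcongr
    _ = ‖(1 - u) * (star (x:P) * (x:P)) * (1 - u)‖ := by
        rw [hnsq, star_mul, h1usa]
        congr 1
        simp only [mul_assoc]
    _ ≤ ‖star x * x + i‖ + ε := by
        rw [hsplit]
        exact (norm_sub_le _ _).trans (add_le_add hfive hsix)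


section MulLe
variable {M : Type*} [NonUnitalNormedRing M] [NormedSpace ℂ M]

lemma quot_norm_mul_le (I : Submodule ℂ M)
    (hl : ∀ (a x : M), x ∈ I → a * x ∈ I) (hr : ∀ (x a : M), x ∈ I → x * a ∈ I) (x y : M) :
    ‖(Submodule.Quotient.mk (x * y) : M ⧸ I)‖
      ≤ ‖(Submodule.Quotient.mk x : M ⧸ I)‖ * ‖(Submodule.Quotient.mk y : M ⧸ I)‖ := by
  set a := ‖(Submodule.Quotient.mk x : M ⧸ I)‖ with ha
  set b := ‖(Submodule.Quotient.mk y : M ⧸ I)‖ with hb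
  have ha0 : 0 ≤ a := norm_nonneg _
  have hb0 : 0 ≤ b := norm_nonneg _
  have key : ∀ ε > (0:ℝ), ‖(Submodule.Quotient.mk (x * y) : M ⧸ I)‖ ≤ (a + ε) * (b + ε) := by
    intro ε hε
    obtain ⟨m₁, hm₁, h1⟩ := Submodule.Quotient.norm_mk_lt (Submodule.Quotient.mk x : M ⧸ I) hε
    obtain ⟨m₂, hm₂, h2⟩ := Submodule.Quotient.norm_mk_lt (Submodule.Quotient.mk y : M ⧸ I) hε
    have d1 : m₁ - x ∈ I := (Submodule.Quotient.eq I).mp hm₁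
    have d2 : m₂ - y ∈ I := (Submodule.Quotient.eq I).mp hm₂
    have e : (Submodule.Quotient.mk (x * y) : M ⧸ I) = Submodule.Quotient.mk (m₁ * m₂) := by
      rw [Submodule.Quotient.eq]
      have : x * y - m₁ * m₂ = -(m₁ * (m₂ - y)) - (m₁ - x) * y := by noncomm_ring
      rw [this]
      exact I.sub_mem (I.neg_mem (hl _ _ d2)) (hr _ _ d1)
    rw [e]
    refine (Submodule.Quotient.norm_mk_le I _).trans ((norm_mul_le _ _).trans ?_)
    exact mul_le_mul h1.le h2.le (norm_nonneg _) (by positivity)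
  refine le_of_forall_pos_le_add fun ε hε => ?_
  set δ := min 1 (ε / (a + b + 1)) with hδ
  have hδ0 : 0 < δ := lt_min one_pos (by positivity)
  have hδ1 : δ ≤ 1 := min_le_left _ _
  have hδ2 : δ ≤ ε / (a + b + 1) := min_le_right _ _
  refine (key δ hδ0).trans ?_
  have h3 : δ * (a + b + 1) ≤ ε := by
    rw [← div_mul_cancel₀ ε (by positivity : (a + b + 1) ≠ 0)]
    exact mul_le_mul_of_nonneg_right hδ2 (by positivity)
  nlinarith

end MulLe

lemma quot_norm_sq_le (I : Submodule ℂ B)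
    (hl : ∀ (a x : B), x ∈ I → a * x ∈ I) (hr : ∀ (x a : B), x ∈ I → x * a ∈ I) (x : B) :
    ‖(Submodule.Quotient.mk x : B ⧸ I)‖ ^ 2
      ≤ ‖(Submodule.Quotient.mk (star x * x) : B ⧸ I)‖ := by
  refine le_of_forall_pos_le_add fun ε hε => ?_
  obtain ⟨m, hm, hmlt⟩ :=
    Submodule.Quotient.norm_mk_lt (Submodule.Quotient.mk (star x * x) : B ⧸ I) hε
  have hmI : m - star x * x ∈ I := (Submodule.Quotient.eq I).mp hm
  calc ‖(Submodule.Quotient.mk x : B ⧸ I)‖ ^ 2 ≤ ‖star x * x + (m - star x * x)‖ :=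
        quot_sq_le_norm_add I hl hr x hmI
    _ = ‖m‖ := by rw [add_sub_cancel]
    _ ≤ _ := hmlt.le

lemma quot_norm_star_le (I : Submodule ℂ B) (hstI : ∀ x : B, x ∈ I → star x ∈ I) (x : B) :
    ‖(Submodule.Quotient.mk (star x) : B ⧸ I)‖ ≤ ‖(Submodule.Quotient.mk x : B ⧸ I)‖ := by
  refine le_of_forall_pos_le_add fun ε hε => ?_
  obtain ⟨m, hm, hmlt⟩ := Submodule.Quotient.norm_mk_lt (Submodule.Quotient.mk x : B ⧸ I) hε
  have e : (Submodule.Quotient.mk (star x) : B ⧸ I) = Submodule.Quotient.mk (star m) := by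
    rw [Submodule.Quotient.eq, ← star_sub]
    exact hstI _ ((Submodule.Quotient.eq I).mp hm.symm)
  rw [e]
  exact (Submodule.Quotient.norm_mk_le I _).trans (by rw [norm_star]; exact hmlt.le)

lemma quot_norm_star_eq (I : Submodule ℂ B) (hstI : ∀ x : B, x ∈ I → star x ∈ I) (x : B) :
    ‖(Submodule.Quotient.mk (star x) : B ⧸ I)‖ = ‖(Submodule.Quotient.mk x : B ⧸ I)‖ := by
  refine le_antisymm (quot_norm_star_le I hstI x) ?_
  simpa using quot_norm_star_le I hstI (star x)

lemma quot_norm_star_mul_self (I : Submodule ℂ B)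
    (hl : ∀ (a x : B), x ∈ I → a * x ∈ I) (hr : ∀ (x a : B), x ∈ I → x * a ∈ I)
    (hstI : ∀ x : B, x ∈ I → star x ∈ I) (x : B) :
    ‖(Submodule.Quotient.mk (star x * x) : B ⧸ I)‖
      = ‖(Submodule.Quotient.mk x : B ⧸ I)‖ ^ 2 := by
  refine le_antisymm ?_ (quot_norm_sq_le I hl hr x)
  calc ‖(Submodule.Quotient.mk (star x * x) : B ⧸ I)‖
      ≤ ‖(Submodule.Quotient.mk (star x) : B ⧸ I)‖ * ‖(Submodule.Quotient.mk x : B ⧸ I)‖ :=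
        quot_norm_mul_le I hl hr _ _
    _ = _ := by rw [quot_norm_star_eq I hstI, sq]

end CStarQuot

/-- The hypotheses of a Kreĭn C*-algebra bundled as a class. -/
class KreinHyps {A : Type*} [NonUnitalNormedRing A] [NormedSpace ℂ A] [StarRing A]
    [StarModule ℂ A] (α : A → A) : Prop where
  hadd : ∀ x y : A, α (x + y) = α x + α y
  hsmul : ∀ (c : ℂ) (x : A), α (c • x) = c • α x
  hmul : ∀ x y : A, α (x * y) = α x * α y
  hstar : ∀ x : A, α (star x) = star (α x)
  hinvol : ∀ x : A, α (α x) = x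
  hfs : ∀ x : A, ‖α (star x) * x‖ = ‖x‖ ^ 2

/-- Type synonym of `A` carrying the C*-involution `x ↦ α (star x)`. -/
def KB (A : Type*) (α : A → A) : Type _ := A

namespace KB
variable {A : Type*} {α : A → A}

def toB : A → KB A α := id
def ofB : KB A α → A := id

section inst
variable [NonUnitalNormedRing A] [NormedSpace ℂ A] [IsScalarTower ℂ A A] [SMulCommClass ℂ A A]
  [StarRing A] [StarModule ℂ A] [CompleteSpace A]

instance : NonUnitalNormedRing (KB A α) := inferInstanceAs (NonUnitalNormedRing A)
instance : NormedSpace ℂ (KB A α) := inferInstanceAs (NormedSpace ℂ A)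
instance : IsScalarTower ℂ (KB A α) (KB A α) := inferInstanceAs (IsScalarTower ℂ A A)
instance : SMulCommClass ℂ (KB A α) (KB A α) := inferInstanceAs (SMulCommClass ℂ A A)
instance : CompleteSpace (KB A α) := inferInstanceAs (CompleteSpace A)

variable [KreinHyps α]

instance : StarRing (KB A α) where
  star x := toB (α (star (ofB x)))
  star_involutive x := by
    show toB (α (star (α (star (ofB x))))) = x
    rw [show star (α (star (ofB x))) = α (star (star (ofB x))) from (KreinHyps.hstar _).symm,
      KreinHyps.hinvol (α := α), star_star]
    rfl
  star_mul x y := by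
    show toB (α (star (ofB x * ofB y))) = toB (α (star (ofB y))) * toB (α (star (ofB x)))
    rw [star_mul, KreinHyps.hmul (α := α)]
    rfl
  star_add x y := by
    show toB (α (star (ofB x + ofB y))) = toB (α (star (ofB x))) + toB (α (star (ofB y)))
    rw [star_add, KreinHyps.hadd (α := α)]
    rfl

instance : StarModule ℂ (KB A α) where
  star_smul c x := by
    show toB (α (star (c • ofB x))) = star c • toB (α (star (ofB x)))
    rw [star_smul, KreinHyps.hsmul (α := α)]
    rfl

instance : CStarRing (KB A α) where
  norm_mul_self_le x := by
    show ‖ofB x‖ * ‖ofB x‖ ≤ ‖α (star (ofB x)) * ofB x‖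
    rw [KreinHyps.hfs (α := α) (ofB x), sq]

instance : NonUnitalCStarAlgebra (KB A α) := { }

end inst
end KB

/-- Let `(A, α)` be a Kreĭn C*-algebra and `I ⊆ A` a norm-closed two-sided
ideal, invariant under the involution and under `α`.  Then `A ⧸ I`, with the quotient norm,
the induced involution, and the induced map `[α]`, is again a Kreĭn C*-algebra with
fundamental symmetry `[α]`. -/
theorem krein_quotient_is_krein
    (α : A → A)
    (hadd : ∀ x y : A, α (x + y) = α x + α y)
    (hsmul : ∀ (c : ℂ) (x : A), α (c • x) = c • α x)
    (hmul : ∀ x y : A, α (x * y) = α x * α y)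
    (hstar : ∀ x : A, α (star x) = star (α x))
    (hinvol : ∀ x : A, α (α x) = x)
    (hfs : ∀ x : A, ‖α (star x) * x‖ = ‖x‖ ^ 2)
    (I : Submodule ℂ A) (hclosed : IsClosed (I : Set A))
    (hl : ∀ (a x : A), x ∈ I → a * x ∈ I)
    (hr : ∀ (x a : A), x ∈ I → x * a ∈ I)
    (hstI : ∀ x : A, x ∈ I → star x ∈ I)
    (hαI : ∀ x : A, x ∈ I → α x ∈ I) :
    -- the quotient norm is `‖x + I‖ = inf {‖x + i‖ | i ∈ I}`
    (∀ x : A, ‖(Submodule.Quotient.mk x : A ⧸ I)‖ = sInf {r : ℝ | ∃ i ∈ I, r = ‖x + i‖}) ∧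
    -- the operations are the induced ones on cosets
    (∀ x y : A, qMul I hl hr (Submodule.Quotient.mk x) (Submodule.Quotient.mk y)
      = Submodule.Quotient.mk (x * y)) ∧
    (∀ x : A, qStar I hstI (Submodule.Quotient.mk x) = Submodule.Quotient.mk (star x)) ∧
    (∀ x : A, qAlpha I α hadd hsmul hαI (Submodule.Quotient.mk x)
      = Submodule.Quotient.mk (α x)) ∧
    -- `A ⧸ I` is a Banach algebra
    CompleteSpace (A ⧸ I) ∧
    (∀ ξ : A ⧸ I, ‖ξ‖ = 0 → ξ = 0) ∧
    (∀ ξ η : A ⧸ I, ‖qMul I hl hr ξ η‖ ≤ ‖ξ‖ * ‖η‖) ∧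
    (∀ ξ η ζ : A ⧸ I, qMul I hl hr (qMul I hl hr ξ η) ζ = qMul I hl hr ξ (qMul I hl hr η ζ)) ∧
    (∀ ξ η ζ : A ⧸ I, qMul I hl hr ξ (η + ζ) = qMul I hl hr ξ η + qMul I hl hr ξ ζ) ∧
    (∀ ξ η ζ : A ⧸ I, qMul I hl hr (η + ζ) ξ = qMul I hl hr η ξ + qMul I hl hr ζ ξ) ∧
    (∀ (c : ℂ) (ξ η : A ⧸ I), qMul I hl hr (c • ξ) η = c • qMul I hl hr ξ η) ∧
    (∀ (c : ℂ) (ξ η : A ⧸ I), qMul I hl hr ξ (c • η) = c • qMul I hl hr ξ η) ∧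
    -- the induced involution is an involution
    (∀ ξ : A ⧸ I, qStar I hstI (qStar I hstI ξ) = ξ) ∧
    (∀ ξ η : A ⧸ I, qStar I hstI (qMul I hl hr ξ η)
      = qMul I hl hr (qStar I hstI η) (qStar I hstI ξ)) ∧
    -- `[α]` is a *-automorphism with `[α] ∘ [α] = id` ...
    (∀ ξ η : A ⧸ I, qAlpha I α hadd hsmul hαI (qMul I hl hr ξ η)
      = qMul I hl hr (qAlpha I α hadd hsmul hαI ξ) (qAlpha I α hadd hsmul hαI η)) ∧
    (∀ ξ : A ⧸ I, qAlpha I α hadd hsmul hαI (qStar I hstI ξ)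
      = qStar I hstI (qAlpha I α hadd hsmul hαI ξ)) ∧
    (∀ ξ : A ⧸ I, qAlpha I α hadd hsmul hαI (qAlpha I α hadd hsmul hαI ξ) = ξ) ∧
    -- ... and a fundamental symmetry
    (∀ ξ : A ⧸ I, ‖qMul I hl hr (qAlpha I α hadd hsmul hαI (qStar I hstI ξ)) ξ‖
      = ‖ξ‖ ^ 2) := by
  haveI hK : KreinHyps α := ⟨hadd, hsmul, hmul, hstar, hinvol, hfs⟩
  have hmk_mul : ∀ x y : A, qMul I hl hr (Submodule.Quotient.mk x) (Submodule.Quotient.mk y)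
      = Submodule.Quotient.mk (x * y) := fun x y => rfl
  have hmk_star : ∀ x : A, qStar I hstI (Submodule.Quotient.mk x)
      = Submodule.Quotient.mk (star x) := fun x => rfl
  have hmk_alpha : ∀ x : A, qAlpha I α hadd hsmul hαI (Submodule.Quotient.mk x)
      = Submodule.Quotient.mk (α x) := fun x => rfl
  refine ⟨?_, hmk_mul, hmk_star, hmk_alpha, ?_, ?_, ?_, ?_, ?_, ?_, ?_, ?_, ?_, ?_, ?_, ?_, ?_, ?_⟩
  · -- the quotient norm formula
    intro x
    have e : {r : ℝ | ∃ i ∈ I, r = ‖x + i‖} = (fun i => ‖x + i‖) '' (I : Set A) := by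
      ext r
      simp [eq_comm]
    rw [e]
    exact quotient_norm_mk_eq I.toAddSubgroup x
  · -- completeness
    infer_instance
  · -- norm zero implies zero
    intro ξ h0
    obtain ⟨m, rfl⟩ := Submodule.Quotient.mk_surjective I ξ
    rw [Submodule.Quotient.mk_eq_zero]
    have hm : m ∈ closure (I : Set A) := (QuotientAddGroup.norm_mk_eq_zero_iff_mem_closure (S := I.toAddSubgroup) (m := m)).mp h0
    rwa [hclosed.closure_eq] at hm
  · -- submultiplicativity
    intro ξ η
    obtain ⟨x, rfl⟩ := Submodule.Quotient.mk_surjective I ξ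
    obtain ⟨y, rfl⟩ := Submodule.Quotient.mk_surjective I η
    rw [hmk_mul]
    exact quot_norm_mul_le I hl hr x y
  · -- associativity
    intro ξ η ζ
    obtain ⟨x, rfl⟩ := Submodule.Quotient.mk_surjective I ξ
    obtain ⟨y, rfl⟩ := Submodule.Quotient.mk_surjective I η
    obtain ⟨z, rfl⟩ := Submodule.Quotient.mk_surjective I ζ
    rw [hmk_mul, hmk_mul, hmk_mul, hmk_mul, mul_assoc]
  · -- left distributivity
    intro ξ η ζ
    obtain ⟨x, rfl⟩ := Submodule.Quotient.mk_surjective I ξ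
    obtain ⟨y, rfl⟩ := Submodule.Quotient.mk_surjective I η
    obtain ⟨z, rfl⟩ := Submodule.Quotient.mk_surjective I ζ
    rw [← Submodule.Quotient.mk_add, hmk_mul, hmk_mul, hmk_mul, ← Submodule.Quotient.mk_add,
      mul_add]
  · -- right distributivity
    intro ξ η ζ
    obtain ⟨x, rfl⟩ := Submodule.Quotient.mk_surjective I ξ
    obtain ⟨y, rfl⟩ := Submodule.Quotient.mk_surjective I η
    obtain ⟨z, rfl⟩ := Submodule.Quotient.mk_surjective I ζ
    rw [← Submodule.Quotient.mk_add, hmk_mul, hmk_mul, hmk_mul, ← Submodule.Quotient.mk_add,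
      add_mul]
  · -- scalars move out of the first factor
    intro c ξ η
    obtain ⟨x, rfl⟩ := Submodule.Quotient.mk_surjective I ξ
    obtain ⟨y, rfl⟩ := Submodule.Quotient.mk_surjective I η
    rw [← Submodule.Quotient.mk_smul, hmk_mul, hmk_mul, ← Submodule.Quotient.mk_smul,
      smul_mul_assoc]
  · -- scalars move out of the second factor
    intro c ξ η
    obtain ⟨x, rfl⟩ := Submodule.Quotient.mk_surjective I ξ
    obtain ⟨y, rfl⟩ := Submodule.Quotient.mk_surjective I η
    rw [← Submodule.Quotient.mk_smul, hmk_mul, hmk_mul, ← Submodule.Quotient.mk_smul,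
      mul_smul_comm]
  · -- the involution is involutive
    intro ξ
    obtain ⟨x, rfl⟩ := Submodule.Quotient.mk_surjective I ξ
    rw [hmk_star, hmk_star, star_star]
  · -- the involution is antimultiplicative
    intro ξ η
    obtain ⟨x, rfl⟩ := Submodule.Quotient.mk_surjective I ξ
    obtain ⟨y, rfl⟩ := Submodule.Quotient.mk_surjective I η
    rw [hmk_mul, hmk_star, hmk_star, hmk_star, hmk_mul, star_mul]
  · -- `[α]` is multiplicative
    intro ξ η
    obtain ⟨x, rfl⟩ := Submodule.Quotient.mk_surjective I ξ
    obtain ⟨y, rfl⟩ := Submodule.Quotient.mk_surjective I η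
    rw [hmk_mul, hmk_alpha, hmk_alpha, hmk_alpha, hmk_mul, hmul]
  · -- `[α]` commutes with the involution
    intro ξ
    obtain ⟨x, rfl⟩ := Submodule.Quotient.mk_surjective I ξ
    rw [hmk_star, hmk_alpha, hmk_alpha, hmk_star, hstar]
  · -- `[α]` is an involution
    intro ξ
    obtain ⟨x, rfl⟩ := Submodule.Quotient.mk_surjective I ξ
    rw [hmk_alpha, hmk_alpha, hinvol]
  · -- the fundamental symmetry property of the quotient
    intro ξ
    obtain ⟨x, rfl⟩ := Submodule.Quotient.mk_surjective I ξ
    rw [hmk_star, hmk_alpha, hmk_mul]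
    exact quot_norm_star_mul_self (B := KB A α) I hl hr
      (fun y hy => hαI _ (hstI _ hy)) (KB.toB x)
end
end

section
/- Let (A, α) and (B, β) be Kreĭn C*-algebras with fundamental symmetries α and β, and let φ : A → B be a ℂ-linear multiplicative map with φ(x*) = φ(x)* for all x ∈ A and φ ∘ α = β ∘ φ. Then φ is norm-continuous (indeed norm-decreasing: ‖φ(x)‖ ≤ ‖x‖ for all x ∈ A), and φ preserves the grading: φ(A₊) ⊆ B₊ and φ(A₋) ⊆ B₋. -/
/-- Twisting the star operation of a Kreĭn C*-algebra by its fundamental symmetry yields a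
genuine (non-unital) C*-algebra structure. -/
def kreinTwistedStarRing {A : Type*} [NonUnitalNormedRing A] [StarRing A]
    (α : A → A)
    (hadd : ∀ x y : A, α (x + y) = α x + α y)
    (hmul : ∀ x y : A, α (x * y) = α x * α y)
    (hstar : ∀ x : A, α (star x) = star (α x))
    (hinvol : ∀ x : A, α (α x) = x) : StarRing A where
  star x := α (star x)
  star_involutive x := by
    show α (star (α (star x))) = x
    rw [← hstar, hinvol, star_star]
  star_mul x y := by
    show α (star (x * y)) = α (star y) * α (star x)
    rw [star_mul, hmul]
  star_add x y := by
    show α (star (x + y)) = α (star x) + α (star y)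
    rw [star_add, hadd]

/-- Twisting the star operation of a Kreĭn C*-algebra by its fundamental symmetry yields a
genuine (non-unital) C*-algebra structure. -/
def kreinTwistedCStar {A : Type*} [NonUnitalNormedRing A] [NormedSpace ℂ A]
    [IsScalarTower ℂ A A] [SMulCommClass ℂ A A] [StarRing A] [StarModule ℂ A] [CompleteSpace A]
    (α : A → A)
    (hadd : ∀ x y : A, α (x + y) = α x + α y)
    (hsmul : ∀ (c : ℂ) (x : A), α (c • x) = c • α x)
    (hmul : ∀ x y : A, α (x * y) = α x * α y)
    (hstar : ∀ x : A, α (star x) = star (α x))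
    (hinvol : ∀ x : A, α (α x) = x)
    (hfs : ∀ x : A, ‖α (star x) * x‖ = ‖x‖ ^ 2) : NonUnitalCStarAlgebra A where
  toNonUnitalNormedRing := ‹_›
  toStarRing := kreinTwistedStarRing α hadd hmul hstar hinvol
  toCompleteSpace := ‹_›
  toCStarRing :=
    @CStarRing.mk A _ (kreinTwistedStarRing α hadd hmul hstar hinvol) (fun x => by
      show ‖x‖ * ‖x‖ ≤ ‖α (star x) * x‖
      rw [hfs, sq])
  toNormedSpace := ‹_›
  toIsScalarTower := ‹_›
  toSMulCommClass := ‹_›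
  toStarModule :=
    @StarModule.mk ℂ A _
      (kreinTwistedStarRing α hadd hmul hstar hinvol).toStarMul.toInvolutiveStar.toStar _
      (fun c x => by
        show α (star (c • x)) = star c • α (star x)
        rw [star_smul, hsmul])

theorem krein_aux_s11 {A B : Type*} [NonUnitalCStarAlgebra A] [NonUnitalCStarAlgebra B]
    (φ : A → B)
    (hadd : ∀ x y : A, φ (x + y) = φ x + φ y)
    (hsmul : ∀ (c : ℂ) (x : A), φ (c • x) = c • φ x)
    (hmul : ∀ x y : A, φ (x * y) = φ x * φ y)
    (hstar : ∀ x : A, φ (star x) = star (φ x))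
    (a : A) : ‖φ a‖ ≤ ‖a‖ := by
  have hzero : φ 0 = 0 := by simpa using hsmul 0 0
  let ψ : A →⋆ₙₐ[ℂ] B :=
    { toFun := φ
      map_smul' := hsmul
      map_zero' := hzero
      map_add' := hadd
      map_mul' := hmul
      map_star' := hstar }
  exact NonUnitalStarAlgHom.norm_apply_le ψ a

/-- A *-homomorphism `φ : A → B` between Kreĭn C*-algebras intertwining the
fundamental symmetries is norm-decreasing (hence continuous) and preserves the grading. -/
theorem krein_hom_is_contractive_and_graded
    {A : Type*} [NonUnitalNormedRing A] [NormedSpace ℂ A]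
    [IsScalarTower ℂ A A] [SMulCommClass ℂ A A] [StarRing A] [StarModule ℂ A] [CompleteSpace A]
    {B : Type*} [NonUnitalNormedRing B] [NormedSpace ℂ B]
    [IsScalarTower ℂ B B] [SMulCommClass ℂ B B] [StarRing B] [StarModule ℂ B] [CompleteSpace B]
    (α : A → A)
    (hadd : ∀ x y : A, α (x + y) = α x + α y)
    (hsmul : ∀ (c : ℂ) (x : A), α (c • x) = c • α x)
    (hmul : ∀ x y : A, α (x * y) = α x * α y)
    (hstar : ∀ x : A, α (star x) = star (α x))
    (hinvol : ∀ x : A, α (α x) = x)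
    (hfs : ∀ x : A, ‖α (star x) * x‖ = ‖x‖ ^ 2)
    (β : B → B)
    (hadd' : ∀ x y : B, β (x + y) = β x + β y)
    (hsmul' : ∀ (c : ℂ) (x : B), β (c • x) = c • β x)
    (hmul' : ∀ x y : B, β (x * y) = β x * β y)
    (hstar' : ∀ x : B, β (star x) = star (β x))
    (hinvol' : ∀ x : B, β (β x) = x)
    (hfs' : ∀ x : B, ‖β (star x) * x‖ = ‖x‖ ^ 2)
    (φ : A → B)
    (hφadd : ∀ x y : A, φ (x + y) = φ x + φ y)
    (hφsmul : ∀ (c : ℂ) (x : A), φ (c • x) = c • φ x)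
    (hφmul : ∀ x y : A, φ (x * y) = φ x * φ y)
    (hφstar : ∀ x : A, φ (star x) = star (φ x))
    (hφα : ∀ x : A, φ (α x) = β (φ x)) :
    (∀ x : A, ‖φ x‖ ≤ ‖x‖) ∧
    Continuous φ ∧
    (∀ x : A, α x = x → β (φ x) = φ x) ∧
    (∀ x : A, α x = -x → β (φ x) = -φ x) := by
  have hle : ∀ x : A, ‖φ x‖ ≤ ‖x‖ := fun x =>
    @krein_aux_s11 A B (kreinTwistedCStar α hadd hsmul hmul hstar hinvol hfs)
      (kreinTwistedCStar β hadd' hsmul' hmul' hstar' hinvol' hfs')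
      φ hφadd hφsmul hφmul
      (fun y => by show φ (α (star y)) = β (star (φ y)); rw [hφα, hφstar]) x
  have hneg : ∀ y : A, φ (-y) = -φ y := fun y => by
    have := hφsmul (-1) y
    simpa using this
  have hsub : ∀ x y : A, φ (x - y) = φ x - φ y := fun x y => by
    rw [sub_eq_add_neg, hφadd, hneg, sub_eq_add_neg]
  refine ⟨hle, ?_, ?_, ?_⟩
  · have : LipschitzWith 1 φ := LipschitzWith.of_dist_le_mul fun x y => by
      rw [dist_eq_norm, dist_eq_norm, NNReal.coe_one, one_mul, ← hsub]
      exact hle _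
    exact this.continuous
  · intro x hx
    rw [← hφα, hx]
  · intro x hx
    rw [← hφα, hx, hneg]
end

section
/- Let (A, α) be a unital Kreĭn C*-algebra with fundamental symmetry α. Then the character space Ω(A, α), viewed as a subset of the space of all functions A → 𝕂 with the product (pointwise-convergence) topology, is a compact Hausdorff topological space. -/
noncomputable section

/-- A character on a Kreĭn C*-algebra `(A, α)`: a unital ℂ-linear multiplicative map
`w : A → 𝕂` with `w (star x) = (w x)*` and `w ∘ α = γ ∘ w`. -/
def IsKChar {A : Type*} [NormedRing A] [NormedAlgebra ℂ A] [StarRing A]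
    (α : A → A) (w : A → Matrix (Fin 2) (Fin 2) ℂ) : Prop :=
  (∀ x, Kmem (w x)) ∧
  (∀ x y, w (x + y) = w x + w y) ∧
  (∀ (c : ℂ) (x : A), w (c • x) = c • w x) ∧
  (∀ x y, w (x * y) = w x * w y) ∧
  w 1 = 1 ∧
  (∀ x, w (star x) = Kst (w x)) ∧
  (∀ x, w (α x) = Kgamma (w x))


set_option maxHeartbeats 800000 in
/-- A unital multiplicative ℂ-linear functional on a Banach algebra is norm-bounded by 1. -/
lemma mult_functional_bound {A : Type*} [NormedRing A] [NormedAlgebra ℂ A] [CompleteSpace A]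
    (φ : A → ℂ)
    (hadd : ∀ x y, φ (x + y) = φ x + φ y)
    (hsmul : ∀ (c : ℂ) (x : A), φ (c • x) = c * φ x)
    (hmul : ∀ x y, φ (x * y) = φ x * φ y)
    (hone : φ 1 = 1) (x : A) : ‖φ x‖ ≤ ‖x‖ := by
  by_contra h
  push_neg at h
  have hc : φ x ≠ 0 := by
    intro h0
    rw [h0, norm_zero] at h
    exact absurd h (not_lt.mpr (norm_nonneg x))
  have ht : ‖(φ x)⁻¹ • x‖ < 1 := by
    rw [norm_smul, norm_inv]
    rw [inv_mul_lt_iff₀ ((norm_nonneg x).trans_lt h), mul_one]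
    exact h
  set u := Units.oneSub ((φ x)⁻¹ • x) ht with hu
  have h1 : φ (↑u) * φ (↑u⁻¹) = 1 := by
    rw [← hmul, Units.mul_inv, hone]
  have h0 : φ (↑u) = 0 := by
    have hval : (↑u : A) = 1 - (φ x)⁻¹ • x := Units.val_oneSub _ _
    have key : φ ((1 - (φ x)⁻¹ • x) + (φ x)⁻¹ • x)
        = φ (1 - (φ x)⁻¹ • x) + (φ x)⁻¹ * φ x := by rw [hadd, hsmul]
    rw [sub_add_cancel, hone] at key
    rw [hval, eq_sub_of_add_eq key.symm, inv_mul_cancel₀ hc, sub_self]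
  rw [h0, zero_mul] at h1
  exact zero_ne_one h1

set_option maxHeartbeats 800000 in
/-- Entries of values of a Kreĭn character are bounded by the norm. -/
lemma kchar_entry_bound {A : Type*} [NormedRing A] [NormedAlgebra ℂ A]
    [StarRing A] [CompleteSpace A] (α : A → A) (w : A → Matrix (Fin 2) (Fin 2) ℂ)
    (hw : IsKChar α w) (x : A) (i j : Fin 2) : ‖w x i j‖ ≤ ‖x‖ := by
  obtain ⟨hK, hadd, hsmul, hmul, hone, -, -⟩ := hw
  set φp : A → ℂ := fun y => w y 0 0 + w y 0 1 with hφp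
  set φm : A → ℂ := fun y => w y 0 0 - w y 0 1 with hφm
  have hmul' : ∀ y z : A, w (y * z) 0 0 = w y 0 0 * w z 0 0 + w y 0 1 * w z 0 1 ∧
      w (y * z) 0 1 = w y 0 0 * w z 0 1 + w y 0 1 * w z 0 0 := by
    intro y z
    have h1 := (hK z).1
    have h2 := (hK z).2
    constructor
    · rw [hmul]
      simp [Matrix.mul_apply, Fin.sum_univ_two, ← h2]
    · rw [hmul]
      simp [Matrix.mul_apply, Fin.sum_univ_two, ← h1]
  have hbp : ∀ y, ‖φp y‖ ≤ ‖y‖ := by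
    apply mult_functional_bound
    · intro y z; simp only [hφp, hadd, Matrix.add_apply]; ring
    · intro c y; simp only [hφp, hsmul, Matrix.smul_apply, smul_eq_mul]; ring
    · intro y z
      have := hmul' y z
      simp only [hφp, this.1, this.2]; ring
    · simp [hφp, hone, Matrix.one_apply]
  have hbm : ∀ y, ‖φm y‖ ≤ ‖y‖ := by
    apply mult_functional_bound
    · intro y z; simp only [hφm, hadd, Matrix.add_apply]; ring
    · intro c y; simp only [hφm, hsmul, Matrix.smul_apply, smul_eq_mul]; ring
    · intro y z
      have := hmul' y z
      simp only [hφm, this.1, this.2]; ring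
    · simp [hφm, hone, Matrix.one_apply]
  have ha : ‖w x 0 0‖ ≤ ‖x‖ := by
    have hx : w x 0 0 = (φp x + φm x) / 2 := by simp only [hφp, hφm]; ring
    rw [hx]
    calc ‖(φp x + φm x) / 2‖ ≤ (‖φp x‖ + ‖φm x‖) / 2 := by
          rw [norm_div]
          simp only [Complex.norm_ofNat]
          gcongr
          exact norm_add_le _ _
      _ ≤ (‖x‖ + ‖x‖) / 2 := by gcongr; exacts [hbp x, hbm x]
      _ = ‖x‖ := by ring
  have hb : ‖w x 0 1‖ ≤ ‖x‖ := by
    have hx : w x 0 1 = (φp x - φm x) / 2 := by simp only [hφp, hφm]; ring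
    rw [hx]
    calc ‖(φp x - φm x) / 2‖ ≤ (‖φp x‖ + ‖φm x‖) / 2 := by
          rw [norm_div]
          simp only [Complex.norm_ofNat]
          gcongr
          exact norm_sub_le _ _
      _ ≤ (‖x‖ + ‖x‖) / 2 := by gcongr; exacts [hbp x, hbm x]
      _ = ‖x‖ := by ring
  fin_cases i <;> fin_cases j
  · exact ha
  · exact hb
  · show ‖w x 1 0‖ ≤ ‖x‖
    rw [show w x 1 0 = w x 0 1 from ((hK x).2).symm]; exact hb
  · show ‖w x 1 1‖ ≤ ‖x‖
    rw [show w x 1 1 = w x 0 0 from ((hK x).1).symm]; exact ha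

set_option maxHeartbeats 1600000 in
/-- The character space `Ω(A, α)` of a unital Kreĭn C*-algebra, with the
topology of pointwise convergence, is a compact Hausdorff space. -/
theorem krein_character_space_compact_hausdorff {A : Type*} [NormedRing A] [NormedAlgebra ℂ A]
    [StarRing A] [StarModule ℂ A] [CompleteSpace A]
(α : A → A)
    (hadd : ∀ x y : A, α (x + y) = α x + α y)
    (hsmul : ∀ (c : ℂ) (x : A), α (c • x) = c • α x)
    (hmul : ∀ x y : A, α (x * y) = α x * α y)
    (hstar : ∀ x : A, α (star x) = star (α x))
    (hinvol : ∀ x : A, α (α x) = x)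
    (hfs : ∀ x : A, ‖α (star x) * x‖ = ‖x‖ ^ 2) :
    IsCompact {w : A → Matrix (Fin 2) (Fin 2) ℂ | IsKChar α w} ∧
    T2Space {w : A → Matrix (Fin 2) (Fin 2) ℂ | IsKChar α w} := by

  constructor
  · -- compactness
    -- the ambient compact box
    have hKc : IsCompact (Set.pi Set.univ
        (fun x : A => {M : Matrix (Fin 2) (Fin 2) ℂ | ∀ i j, ‖M i j‖ ≤ ‖x‖})) := by
      apply isCompact_univ_pi
      intro x
      have heq : {M : Matrix (Fin 2) (Fin 2) ℂ | ∀ i j, ‖M i j‖ ≤ ‖x‖} =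
          Set.pi Set.univ (fun _i : Fin 2 => Set.pi Set.univ
            (fun _j : Fin 2 => Metric.closedBall (0 : ℂ) ‖x‖)) := by
        ext M
        constructor
        · intro h i _ j _
          simpa [Metric.mem_closedBall, dist_zero_right] using h i j
        · intro h i j
          simpa [Metric.mem_closedBall, dist_zero_right] using
            h i (Set.mem_univ i) j (Set.mem_univ j)
      rw [heq]
      exact isCompact_univ_pi fun _ => isCompact_univ_pi fun _ => isCompact_closedBall 0 ‖x‖
    -- continuity of evaluations
    have hev : ∀ (x : A) (i j : Fin 2),
        Continuous fun w : A → Matrix (Fin 2) (Fin 2) ℂ => w x i j := fun x i j =>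
      (continuous_apply x).matrix_elem i j
    -- closedness of the character set
    have c1 : IsClosed {w : A → Matrix (Fin 2) (Fin 2) ℂ | ∀ x, Kmem (w x)} := by
      simp only [Set.setOf_forall]
      refine isClosed_iInter fun x => ?_
      have : {w : A → Matrix (Fin 2) (Fin 2) ℂ | Kmem (w x)} =
          {w | w x 0 0 = w x 1 1} ∩ {w | w x 0 1 = w x 1 0} := rfl
      rw [this]
      exact (isClosed_eq (hev x 0 0) (hev x 1 1)).inter (isClosed_eq (hev x 0 1) (hev x 1 0))
    have c2 : IsClosed {w : A → Matrix (Fin 2) (Fin 2) ℂ | ∀ x y, w (x + y) = w x + w y} := by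
      simp only [Set.setOf_forall]
      exact isClosed_iInter fun x => isClosed_iInter fun y =>
        isClosed_eq (continuous_apply _) ((continuous_apply x).add (continuous_apply y))
    have c3 : IsClosed {w : A → Matrix (Fin 2) (Fin 2) ℂ |
        ∀ (c : ℂ) (x : A), w (c • x) = c • w x} := by
      simp only [Set.setOf_forall]
      exact isClosed_iInter fun c => isClosed_iInter fun x =>
        isClosed_eq (continuous_apply _) ((continuous_apply x).const_smul c)
    have c4 : IsClosed {w : A → Matrix (Fin 2) (Fin 2) ℂ | ∀ x y, w (x * y) = w x * w y} := by
      simp only [Set.setOf_forall]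
      exact isClosed_iInter fun x => isClosed_iInter fun y =>
        isClosed_eq (continuous_apply _) ((continuous_apply x).mul (continuous_apply y))
    have c5 : IsClosed {w : A → Matrix (Fin 2) (Fin 2) ℂ | w 1 = 1} :=
      isClosed_eq (continuous_apply 1) continuous_const
    have hcKst : ∀ x : A, Continuous fun w : A → Matrix (Fin 2) (Fin 2) ℂ => Kst (w x) := by
      intro x
      apply continuous_matrix
      intro i j
      by_cases h : i = j
      · simp only [Kst, Matrix.of_apply, h, if_pos rfl, starRingEnd_apply]
        exact continuous_star.comp (hev x j j)
      · simp only [Kst, Matrix.of_apply, if_neg h, starRingEnd_apply]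
        exact (continuous_star.comp (hev x i j)).neg
    have hcKg : ∀ x : A, Continuous fun w : A → Matrix (Fin 2) (Fin 2) ℂ => Kgamma (w x) := by
      intro x
      apply continuous_matrix
      intro i j
      by_cases h : i = j
      · simp only [Kgamma, Matrix.of_apply, h, if_pos rfl]
        exact hev x j j
      · simp only [Kgamma, Matrix.of_apply, if_neg h]
        exact (hev x i j).neg
    have c6 : IsClosed {w : A → Matrix (Fin 2) (Fin 2) ℂ | ∀ x, w (star x) = Kst (w x)} := by
      simp only [Set.setOf_forall]
      exact isClosed_iInter fun x => isClosed_eq (continuous_apply _) (hcKst x)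
    have c7 : IsClosed {w : A → Matrix (Fin 2) (Fin 2) ℂ | ∀ x, w (α x) = Kgamma (w x)} := by
      simp only [Set.setOf_forall]
      exact isClosed_iInter fun x => isClosed_eq (continuous_apply _) (hcKg x)
    have hScl : IsClosed {w : A → Matrix (Fin 2) (Fin 2) ℂ | IsKChar α w} := by
      have e : {w : A → Matrix (Fin 2) (Fin 2) ℂ | IsKChar α w} =
          {w : A → Matrix (Fin 2) (Fin 2) ℂ | ∀ x, Kmem (w x)} ∩
          ({w | ∀ x y, w (x + y) = w x + w y} ∩
          ({w | ∀ (c : ℂ) (x : A), w (c • x) = c • w x} ∩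
          ({w | ∀ x y, w (x * y) = w x * w y} ∩
          ({w | w 1 = 1} ∩
          ({w | ∀ x, w (star x) = Kst (w x)} ∩
          {w | ∀ x, w (α x) = Kgamma (w x)}))))) := rfl
      rw [e]
      exact c1.inter (c2.inter (c3.inter (c4.inter (c5.inter (c6.inter c7)))))
    exact hKc.of_isClosed_subset hScl
      (fun w hw x _ i j => kchar_entry_bound α w hw x i j)
  · infer_instance
end
end

section
/- Let (A, α) be a unital Kreĭn C*-algebra with fundamental symmetry α and let w be a character on (A, α). Then for every x ∈ A: w(x) = 0 if and only if w(α(x*)·x) = 0. -/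
noncomputable section

/-- For a character `w` on a unital Kreĭn C*-algebra `(A, α)` and any
`x ∈ A`: `w x = 0` iff `w (α (star x) * x) = 0`. -/
theorem krein_character_kernel_dagger {A : Type*} [NormedRing A] [NormedAlgebra ℂ A]
    [StarRing A] [StarModule ℂ A] [CompleteSpace A]
(α : A → A)
    (hadd : ∀ x y : A, α (x + y) = α x + α y)
    (hsmul : ∀ (c : ℂ) (x : A), α (c • x) = c • α x)
    (hmul : ∀ x y : A, α (x * y) = α x * α y)
    (hstar : ∀ x : A, α (star x) = star (α x))
    (hinvol : ∀ x : A, α (α x) = x)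
    (hfs : ∀ x : A, ‖α (star x) * x‖ = ‖x‖ ^ 2)
    (w : A → Matrix (Fin 2) (Fin 2) ℂ) (hw : IsKChar α w) :
    ∀ x : A, w x = 0 ↔ w (α (star x) * x) = 0 := by
  intro x
  obtain ⟨hmem, -, -, hwmul, -, hwstar, hwalpha⟩ := hw
  constructor
  · intro h
    rw [hwmul, hwalpha, hwstar, h]
    ext i j
    simp [Kgamma, Kst, Matrix.mul_apply]
  · intro h
    have hkey : w (α (star x) * x) 0 0 = 0 := by rw [h]; rfl
    rw [hwmul, hwalpha, hwstar] at hkey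
    obtain ⟨h1, h2⟩ := hmem x
    set a := w x 0 0 with ha
    set b := w x 0 1 with hb
    have hexp : (Kgamma (Kst (w x)) * w x) 0 0 =
        starRingEnd ℂ a * a + starRingEnd ℂ b * b := by
      simp [Matrix.mul_apply, Fin.sum_univ_two, Kgamma, Kst, Matrix.of_apply, ← h2, ← ha, ← hb]
    rw [hexp] at hkey
    have h3 : Complex.normSq a + Complex.normSq b = 0 := by
      have := congrArg Complex.re hkey
      simpa [Complex.normSq_eq_conj_mul_self, Complex.normSq_apply] using this
    have ha0 : a = 0 := by
      have := (Complex.normSq_eq_zero (z := a)).mp (by nlinarith [Complex.normSq_nonneg a, Complex.normSq_nonneg b])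
      exact this
    have hb0 : b = 0 := by
      have := (Complex.normSq_eq_zero (z := b)).mp (by nlinarith [Complex.normSq_nonneg a, Complex.normSq_nonneg b])
      exact this
    have e00 : w x 0 0 = 0 := ha0
    have e01 : w x 0 1 = 0 := hb0
    have e11 : w x 1 1 = 0 := by rw [← h1]; exact ha0
    have e10 : w x 1 0 = 0 := by rw [← h2]; exact hb0
    ext i j
    fin_cases i <;> fin_cases j <;> simp [e00, e01, e10, e11]
end
end

section
/- Let (A, α) be a unital Kreĭn C*-algebra with fundamental symmetry α and let w₁, w₂ be characters on (A, α) whose restrictions to the even part coincide: w₁(a) = w₂(a) for all a ∈ A₊. Then ker(w₁) = ker(w₂). -/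
noncomputable section

lemma Kmem_zero_iff (M : Matrix (Fin 2) (Fin 2) ℂ) (hM : Kmem M) :
    M = 0 ↔ M 0 0 = 0 ∧ M 0 1 = 0 := by
  constructor
  · intro h; simp [h]
  · rintro ⟨h1, h2⟩
    ext i j
    simp only [Matrix.zero_apply]
    fin_cases i <;> fin_cases j
    · exact h1
    · exact h2
    · exact hM.2 ▸ h2
    · exact hM.1 ▸ h1

/-- Two characters of a unital Kreĭn C*-algebra which agree on the even part
have the same kernel. -/
theorem krein_characters_same_even_part_same_kernel {A : Type*} [NormedRing A] [NormedAlgebra ℂ A]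
    [StarRing A] [StarModule ℂ A] [CompleteSpace A]
(α : A → A)
    (hadd : ∀ x y : A, α (x + y) = α x + α y)
    (hsmul : ∀ (c : ℂ) (x : A), α (c • x) = c • α x)
    (hmul : ∀ x y : A, α (x * y) = α x * α y)
    (hstar : ∀ x : A, α (star x) = star (α x))
    (hinvol : ∀ x : A, α (α x) = x)
    (hfs : ∀ x : A, ‖α (star x) * x‖ = ‖x‖ ^ 2)
    (w₁ w₂ : A → Matrix (Fin 2) (Fin 2) ℂ)
    (hw₁ : IsKChar α w₁) (hw₂ : IsKChar α w₂)
    (heven : ∀ a : A, α a = a → w₁ a = w₂ a) :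
    ∀ x : A, w₁ x = 0 ↔ w₂ x = 0 := by
  intro x
  set p : A := (2⁻¹ : ℂ) • (x + α x) with hpdef
  set q : A := (2⁻¹ : ℂ) • (x + (-1 : ℂ) • α x) with hqdef
  have hx : p + q = x := by rw [hpdef, hqdef]; module
  have hαp : α p = p := by
    rw [hpdef, hsmul, hadd, hinvol]; module
  have hαq : α q = (-1 : ℂ) • q := by
    rw [hqdef, hsmul, hadd, hsmul, hinvol]; module
  -- diagonal of w q is 0, off-diagonal of w p is 0
  have key : ∀ w : A → Matrix (Fin 2) (Fin 2) ℂ, IsKChar α w →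
      w q 0 0 = 0 ∧ w p 0 1 = 0 := by
    intro w hw
    obtain ⟨hK, ha, hs, hm, ho, hst, hg⟩ := hw
    constructor
    · have h1 : Kgamma (w q) 0 0 = ((-1 : ℂ) • w q) 0 0 := by
        rw [← hg, hαq, hs]
      simp [Kgamma] at h1
      linear_combination h1 / 2
    · have h2 : Kgamma (w p) 0 1 = w p 0 1 := by rw [← hg, hαp]
      simp [Kgamma] at h2
      linear_combination -h2 / 2
  obtain ⟨hq1, hp1⟩ := key w₁ hw₁
  obtain ⟨hq2, hp2⟩ := key w₂ hw₂
  obtain ⟨hK1, ha1, hs1, hm1, ho1, hst1, hg1⟩ := hw₁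
  obtain ⟨hK2, ha2, hs2, hm2, ho2, hst2, hg2⟩ := hw₂
  have hpp : w₁ p = w₂ p := heven p hαp
  -- the element star q * q is even
  have hαy : α (star q * q) = star q * q := by
    rw [hmul, hstar, hαq, star_smul]
    simp [smul_mul_assoc, mul_smul_comm, smul_smul]
  have hy12 : w₁ (star q * q) = w₂ (star q * q) := heven _ hαy
  -- compute the (0,0) entry of w (star q * q)
  have hcomp : ∀ w : A → Matrix (Fin 2) (Fin 2) ℂ,
      (∀ z, Kmem (w z)) → (∀ y z, w (y * z) = w y * w z) →
      (∀ z, w (star z) = Kst (w z)) → w q 0 0 = 0 →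
      w (star q * q) 0 0 = -(starRingEnd ℂ (w q 0 1) * w q 0 1) := by
    intro w hK hm hst h00
    rw [hm, hst, Matrix.mul_apply, Fin.sum_univ_two]
    have h10 : w q 1 0 = w q 0 1 := (hK q).2.symm
    simp [Kst, h00, h10]
  have hb : starRingEnd ℂ (w₁ q 0 1) * w₁ q 0 1 = starRingEnd ℂ (w₂ q 0 1) * w₂ q 0 1 := by
    have e1 := hcomp w₁ hK1 hm1 hst1 hq1
    have e2 := hcomp w₂ hK2 hm2 hst2 hq2
    rw [hy12] at e1
    rw [e2] at e1
    linear_combination e1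
  have hbiff : w₁ q 0 1 = 0 ↔ w₂ q 0 1 = 0 := by
    constructor
    · intro h; have : starRingEnd ℂ (w₂ q 0 1) * w₂ q 0 1 = 0 := by rw [← hb, h]; simp
      rcases mul_eq_zero.mp this with h' | h'
      · exact (map_eq_zero _).mp h'
      · exact h'
    · intro h; have : starRingEnd ℂ (w₁ q 0 1) * w₁ q 0 1 = 0 := by rw [hb, h]; simp
      rcases mul_eq_zero.mp this with h' | h'
      · exact (map_eq_zero _).mp h'
      · exact h'
  have hzero := Kmem_zero_iff
  have hx1 : w₁ x = w₁ p + w₁ q := by rw [← hx, ha1]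
  have hx2 : w₂ x = w₂ p + w₂ q := by rw [← hx, ha2]
  rw [hzero _ (hK1 x), hzero _ (hK2 x), hx1, hx2]
  simp only [Matrix.add_apply, hq1, hq2, hp1, hp2, hpp, add_zero, zero_add]
  rw [hbiff]
end
end

section
/- Let (A, α) be a unital imprimitive Kreĭn C*-algebra with fundamental symmetry α, and let w₁, w₂ be characters on (A, α) such that w₁(a) = w₂(a) for all a ∈ A₊. Then either w₂ = w₁ or w₂ = γ ∘ w₁. -/
noncomputable section

/-- `(A, α)` is imprimitive (full): the norm-closure of the linear span of the products of
odd elements is the whole even part. -/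
def Imprimitive {A : Type*} [NormedRing A] [NormedAlgebra ℂ A]
    (α : A → A) : Prop :=
  closure ((Submodule.span ℂ {z : A | ∃ x y, α x = -x ∧ α y = -y ∧ z = x * y} :
      Submodule ℂ A) : Set A)
    = {x : A | α x = x}

/-- If two characters of a unital imprimitive Kreĭn C*-algebra agree on the
even part, then `w₂ = w₁` or `w₂ = γ ∘ w₁`. -/
theorem krein_characters_agree_up_to_gamma {A : Type*} [NormedRing A] [NormedAlgebra ℂ A]
    [StarRing A] [StarModule ℂ A] [CompleteSpace A]
(α : A → A)
    (hadd : ∀ x y : A, α (x + y) = α x + α y)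
    (hsmul : ∀ (c : ℂ) (x : A), α (c • x) = c • α x)
    (hmul : ∀ x y : A, α (x * y) = α x * α y)
    (hstar : ∀ x : A, α (star x) = star (α x))
    (hinvol : ∀ x : A, α (α x) = x)
    (hfs : ∀ x : A, ‖α (star x) * x‖ = ‖x‖ ^ 2)
    (himp : Imprimitive α)
    (w₁ w₂ : A → Matrix (Fin 2) (Fin 2) ℂ)
    (hw₁ : IsKChar α w₁) (hw₂ : IsKChar α w₂)
    (heven : ∀ a : A, α a = a → w₁ a = w₂ a) :
    (∀ x : A, w₂ x = w₁ x) ∨ (∀ x : A, w₂ x = Kgamma (w₁ x)) := by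
  obtain ⟨hK1, ha1, hs1, hm1, ho1, hst1, hg1⟩ := hw₁
  obtain ⟨hK2, ha2, hs2, hm2, ho2, hst2, hg2⟩ := hw₂
  have hsub : ∀ x y : A, α (x - y) = α x - α y := by
    intro x y
    rw [sub_eq_add_neg, hadd, ← neg_one_smul ℂ y, hsmul, neg_one_smul, ← sub_eq_add_neg]
  have gamodd : ∀ (w : A → Matrix (Fin 2) (Fin 2) ℂ),
      (∀ (c : ℂ) (x : A), w (c • x) = c • w x) → (∀ x, w (α x) = Kgamma (w x)) →
      ∀ m : A, α m = -m → Kgamma (w m) = -(w m) := by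
    intro w hs hg m hm
    rw [← hg, hm, ← neg_one_smul ℂ m, hs, neg_one_smul]
  have oddfact : ∀ (w : A → Matrix (Fin 2) (Fin 2) ℂ),
      (∀ (c : ℂ) (x : A), w (c • x) = c • w x) → (∀ x, w (α x) = Kgamma (w x)) →
      ∀ m : A, α m = -m → (w m 0 0 = 0 ∧ w m 1 1 = 0) := by
    intro w hs hg m hm
    have h1 := gamodd w hs hg m hm
    constructor
    · have h2 := congrFun (congrFun h1 0) 0
      simp only [Kgamma, Matrix.of_apply, if_true, eq_self_iff_true, Matrix.neg_apply] at h2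
      linear_combination h2 / 2
    · have h2 := congrFun (congrFun h1 1) 1
      simp only [Kgamma, Matrix.of_apply, if_true, eq_self_iff_true, Matrix.neg_apply] at h2
      linear_combination h2 / 2
  have key : ∀ x y : A, α x = -x → α y = -y →
      w₁ x 0 1 * w₁ y 0 1 = w₂ x 0 1 * w₂ y 0 1 := by
    intro x y hx hy
    have hxy : α (x * y) = x * y := by rw [hmul, hx, hy, neg_mul_neg]
    have h12 : w₁ x * w₁ y = w₂ x * w₂ y := by
      rw [← hm1, ← hm2, heven (x * y) hxy]
    have e := congrFun (congrFun h12 0) 0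
    simp only [Matrix.mul_apply, Fin.sum_univ_two] at e
    rw [(oddfact w₁ hs1 hg1 x hx).1, (oddfact w₂ hs2 hg2 x hx).1,
      ← (hK1 y).2, ← (hK2 y).2] at e
    simpa using e
  have decomp : ∀ x : A, ∃ p m : A, α p = p ∧ α m = -m ∧ x = p + m := by
    intro x
    refine ⟨(2:ℂ)⁻¹ • (x + α x), (2:ℂ)⁻¹ • (x - α x), ?_, ?_, ?_⟩
    · rw [hsmul, hadd, hinvol, add_comm]
    · rw [hsmul, hsub, hinvol, ← smul_neg, neg_sub]
    · rw [← smul_add]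
      have h2 : (x + α x) + (x - α x) = (2:ℂ) • x := by
        rw [two_smul]; abel
      rw [h2, smul_smul]
      norm_num
  have oddeq : ∀ (m : A), α m = -m → w₂ m 0 1 = w₁ m 0 1 → w₂ m = w₁ m := by
    intro m hm hb
    have d1 := oddfact w₁ hs1 hg1 m hm
    have d2 := oddfact w₂ hs2 hg2 m hm
    ext i j
    fin_cases i <;> fin_cases j
    · show w₂ m 0 0 = w₁ m 0 0
      rw [d1.1, d2.1]
    · exact hb
    · show w₂ m 1 0 = w₁ m 1 0
      rw [← (hK1 m).2, ← (hK2 m).2]; exact hb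
    · show w₂ m 1 1 = w₁ m 1 1
      rw [d1.2, d2.2]
  by_cases hz : ∀ m : A, α m = -m → w₁ m 0 1 = 0
  · left
    intro x
    obtain ⟨p, m, hp, hm, rfl⟩ := decomp x
    have hmeq : w₂ m = w₁ m := by
      apply oddeq m hm
      have h3 := key m m hm hm
      rw [hz m hm, mul_zero] at h3
      rw [hz m hm, mul_self_eq_zero.mp h3.symm]
    rw [ha1, ha2, ← heven p hp, hmeq]
  · push_neg at hz
    obtain ⟨y, hy, hby⟩ := hz
    have hsq := key y y hy hy
    have hcases : w₂ y 0 1 = w₁ y 0 1 ∨ w₂ y 0 1 = -(w₁ y 0 1) := by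
      have h0 : (w₂ y 0 1 - w₁ y 0 1) * (w₂ y 0 1 + w₁ y 0 1) = 0 := by
        linear_combination -hsq
      rcases mul_eq_zero.mp h0 with h | h
      · exact Or.inl (sub_eq_zero.mp h)
      · exact Or.inr (eq_neg_of_add_eq_zero_left h)
    rcases hcases with hc | hc
    · left
      intro x
      obtain ⟨p, m, hp, hm, rfl⟩ := decomp x
      have hmb : w₂ m 0 1 = w₁ m 0 1 := by
        have hk := key m y hm hy
        rw [hc] at hk
        exact (mul_right_cancel₀ hby hk.symm)
      rw [ha1, ha2, ← heven p hp, oddeq m hm hmb]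
    · right
      have Kadd : ∀ M N : Matrix (Fin 2) (Fin 2) ℂ,
          Kgamma (M + N) = Kgamma M + Kgamma N := by
        intro M N
        ext i j
        by_cases h : i = j
        · simp only [Kgamma, Matrix.of_apply, Matrix.add_apply, if_pos h]
        · simp only [Kgamma, Matrix.of_apply, Matrix.add_apply, if_neg h]
          ring
      intro x
      obtain ⟨p, m, hp, hm, rfl⟩ := decomp x
      have hgp : Kgamma (w₁ p) = w₁ p := by rw [← hg1, hp]
      have hmb : w₂ m 0 1 = -(w₁ m 0 1) := by
        have hk := key m y hm hy
        rw [hc] at hk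
        have h4 : w₁ m 0 1 * w₁ y 0 1 = -(w₂ m 0 1) * w₁ y 0 1 := by
          rw [hk]; ring
        have h5 := mul_right_cancel₀ hby h4
        linear_combination h5
      have hmeq : w₂ m = -(w₁ m) := by
        have d1 := oddfact w₁ hs1 hg1 m hm
        have d2 := oddfact w₂ hs2 hg2 m hm
        ext i j
        fin_cases i <;> fin_cases j
        · show w₂ m 0 0 = -(w₁ m 0 0)
          rw [d1.1, d2.1, neg_zero]
        · show w₂ m 0 1 = -(w₁ m 0 1)
          exact hmb
        · show w₂ m 1 0 = -(w₁ m 1 0)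
          rw [← (hK1 m).2, ← (hK2 m).2]; exact hmb
        · show w₂ m 1 1 = -(w₁ m 1 1)
          rw [d1.2, d2.2, neg_zero]
      rw [ha1, ha2, Kadd, hgp, gamodd w₁ hs1 hg1 m hm, ← heven p hp, hmeq]
end
end

section
/- Let (A, α) be a unital commutative imprimitive Kreĭn C*-algebra with fundamental symmetry α, and let w⁰ : A₊ → ℂ be a character of the commutative unital C*-algebra A₊ (a unital ℂ-linear multiplicative map with w⁰(a*) = conj(w⁰(a)) for all a ∈ A₊). Then there exists a character w on (A, α) extending w⁰ on the even part, i.e. w(a) = w⁰(a)·1_𝕂 for all a ∈ A₊. -/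
noncomputable section

/-- Every character `w⁰` of the even part of a unital commutative
imprimitive Kreĭn C*-algebra extends to a character `w` of `(A, α)` with
`w a = w⁰ a • 1` for all `a ∈ A₊`. -/
theorem krein_character_extension {A : Type*} [NormedRing A] [NormedAlgebra ℂ A]
    [StarRing A] [StarModule ℂ A] [CompleteSpace A]
(α : A → A)
    (hadd : ∀ x y : A, α (x + y) = α x + α y)
    (hsmul : ∀ (c : ℂ) (x : A), α (c • x) = c • α x)
    (hmul : ∀ x y : A, α (x * y) = α x * α y)
    (hstar : ∀ x : A, α (star x) = star (α x))
    (hinvol : ∀ x : A, α (α x) = x)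
    (hfs : ∀ x : A, ‖α (star x) * x‖ = ‖x‖ ^ 2)
    (hcomm : ∀ x y : A, x * y = y * x)
    (himp : Imprimitive α)
    (w₀ : A → ℂ)
    (h₀one : w₀ 1 = 1)
    (h₀add : ∀ a b : A, α a = a → α b = b → w₀ (a + b) = w₀ a + w₀ b)
    (h₀smul : ∀ (c : ℂ) (a : A), α a = a → w₀ (c • a) = c * w₀ a)
    (h₀mul : ∀ a b : A, α a = a → α b = b → w₀ (a * b) = w₀ a * w₀ b)
    (h₀star : ∀ a : A, α a = a → w₀ (star a) = starRingEnd ℂ (w₀ a)) :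
    ∃ w : A → Matrix (Fin 2) (Fin 2) ℂ, IsKChar α w ∧
      ∀ a : A, α a = a → w a = w₀ a • (1 : Matrix (Fin 2) (Fin 2) ℂ) := by
  classical
  -- basic facts about α
  have hα1 : α 1 = 1 := by
    have h : ∀ y : A, y = α 1 * y := by
      intro y
      conv_lhs => rw [← hinvol y]
      calc α (α y) = α (1 * α y) := by rw [one_mul]
        _ = α 1 * α (α y) := hmul 1 (α y)
        _ = α 1 * y := by rw [hinvol]
    calc α 1 = α 1 * 1 := (mul_one _).symm
      _ = 1 := (h 1).symm
  have hα0 : α 0 = 0 := by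
    have := hsmul 0 0; simpa using this
  have hneg : ∀ x : A, α (-x) = -α x := by
    intro x; have := hsmul (-1) x; simpa using this
  have hsub : ∀ x y : A, α (x - y) = α x - α y := by
    intro x y; rw [sub_eq_add_neg, hadd, hneg, sub_eq_add_neg]
  have hw₀0 : w₀ 0 = 0 := by
    have := h₀smul 0 0 hα0; simpa using this
  have h1ne : (1 : A) ≠ 0 := by
    intro h
    apply one_ne_zero (α := ℂ)
    rw [← h₀one, h, hw₀0]
  have hn1 : ‖(1 : A)‖ = 1 := by
    have h := hfs 1
    rw [star_one, hα1, one_mul] at h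
    have h1n : ‖(1 : A)‖ ≠ 0 := by simpa using h1ne
    have h2 : ‖(1 : A)‖ * 1 = ‖(1 : A)‖ * ‖(1 : A)‖ := by
      rw [mul_one, ← sq]; exact h
    exact (mul_left_cancel₀ h1n h2).symm
  have hevenmul : ∀ a b : A, α a = a → α b = b → α (a * b) = a * b := by
    intro a b ha hb; rw [hmul, ha, hb]
  have hoddmul : ∀ a b : A, α a = -a → α b = -b → α (a * b) = a * b := by
    intro a b ha hb; rw [hmul, ha, hb, neg_mul_neg]
  have hw₀neg : ∀ a : A, α a = a → w₀ (-a) = -w₀ a := by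
    intro a ha
    have := h₀smul (-1) a ha; simpa using this
  have hstareven : ∀ a : A, α a = a → α (star a) = star a := by
    intro a ha; rw [hstar, ha]
  -- the C*-algebra facts via the auxiliary involution x ↦ α (star x)
  have hK : (∀ x : A, ‖α x‖ = ‖x‖) ∧
      (∀ u : A, α (star u) = u →
        ‖((‖u * u‖ : ℝ) : ℂ) • (1 : A) - u * u‖ ≤ ‖u * u‖) := by
    have hdinv : ∀ x : A, α (star (α (star x))) = x := by
      intro x; rw [← hstar, hinvol, star_star]
    have hdmul : ∀ x y : A, α (star (x * y)) = α (star y) * α (star x) := by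
      intro x y; rw [star_mul, hmul]
    have hdadd : ∀ x y : A, α (star (x + y)) = α (star x) + α (star y) := by
      intro x y; rw [star_add, hadd]
    have hdsmul : ∀ (r : ℂ) (x : A), α (star (r • x)) = star r • α (star x) := by
      intro r x; rw [star_smul, hsmul]
    have hdnorm : ∀ x : A, ‖x‖ * ‖x‖ ≤ ‖α (star x) * x‖ := by
      intro x; rw [hfs x, sq]
    have hmapstar : ∀ x : A, α (α (star x)) = α (star (α x)) := by
      intro x; rw [hstar]
    have hcommutes : ∀ r : ℂ, α (algebraMap ℂ A r) = algebraMap ℂ A r := by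
      intro r; rw [Algebra.algebraMap_eq_smul_one, hsmul, hα1]
    have hinj : Function.Injective α := by
      intro x y hxy
      rw [← hinvol x, hxy, hinvol]
    letI instStar : StarRing A :=
      { star := fun x => α (star x)
        star_involutive := hdinv
        star_mul := hdmul
        star_add := hdadd }
    letI instSM : StarModule ℂ A := ⟨hdsmul⟩
    letI instCStar : CStarRing A := ⟨hdnorm⟩
    letI instCSA : CStarAlgebra A :=
      { toNormedRing := inferInstance
        toStarRing := instStar
        toCompleteSpace := inferInstance
        toCStarRing := instCStar
        toNormedAlgebra := inferInstance
        toStarModule := instSM }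
    letI : Nontrivial A := ⟨⟨1, 0, h1ne⟩⟩
    letI : NormOneClass A := ⟨hn1⟩
    constructor
    · let ψ : A →⋆ₐ[ℂ] A :=
        { toFun := α
          map_one' := hα1
          map_mul' := hmul
          map_zero' := hα0
          map_add' := hadd
          commutes' := hcommutes
          map_star' := hmapstar }
      exact fun x => NonUnitalStarAlgHom.norm_map ψ hinj x
    · intro u hu
      have hsa : IsSelfAdjoint u := hu
      have hbsa : IsSelfAdjoint (u * u) := by
        have := hsa.pow 2
        rwa [pow_two] at this
      have husa : IsSelfAdjoint (((‖u * u‖ : ℝ) : ℂ) • (1 : A) - u * u) := by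
        refine IsSelfAdjoint.sub ?_ hbsa
        exact IsSelfAdjoint.smul (Complex.conj_ofReal _) (IsSelfAdjoint.one (R := A))
      have hspec : ∀ z ∈ spectrum ℂ (((‖u * u‖ : ℝ) : ℂ) • (1 : A) - u * u),
          ‖z‖ ≤ ‖u * u‖ := by
        intro z hz
        rw [show ((‖u * u‖ : ℝ) : ℂ) • (1 : A) - u * u
              = algebraMap ℂ A ((‖u * u‖ : ℝ) : ℂ) - u * u from by
            rw [Algebra.algebraMap_eq_smul_one],
          ← spectrum.singleton_sub_eq] at hz
        obtain ⟨s, hs, b, hb, rfl⟩ := Set.mem_sub.mp hz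
        rw [Set.mem_singleton_iff] at hs
        subst hs
        have hbnorm : ‖b‖ ≤ ‖u * u‖ := spectrum.norm_le_norm_of_mem hb
        have hb2 : b ∈ spectrum ℂ (u ^ 2) := by rwa [pow_two]
        rw [spectrum.map_pow] at hb2
        obtain ⟨y, hy, rfl⟩ := hb2
        obtain ⟨yr, hyr⟩ : ∃ r : ℝ, y = (r : ℂ) := ⟨y.re, hsa.mem_spectrum_eq_re hy⟩
        rw [hyr]
        beta_reduce
        have hsq : ((yr : ℂ)) ^ 2 = ((yr ^ 2 : ℝ) : ℂ) := by push_cast; ring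
        rw [hsq]
        have hble : yr ^ 2 ≤ ‖u * u‖ := by
          have h' : ‖((yr ^ 2 : ℝ) : ℂ)‖ ≤ ‖u * u‖ := by
            rw [← hsq, ← hyr]; exact hbnorm
          rw [Complex.norm_real] at h'
          calc yr ^ 2 ≤ |yr ^ 2| := le_abs_self _
            _ ≤ ‖u * u‖ := by simpa using h'
        have hcast : ((‖u * u‖ : ℝ) : ℂ) - ((yr ^ 2 : ℝ) : ℂ) = ((‖u * u‖ - yr ^ 2 : ℝ) : ℂ) := by
          push_cast; ring
        rw [hcast, Complex.norm_real]
        rw [Real.norm_eq_abs, abs_of_nonneg (by linarith)]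
        nlinarith [sq_nonneg yr]
      have hrad : spectralRadius ℂ (((‖u * u‖ : ℝ) : ℂ) • (1 : A) - u * u)
          ≤ (‖u * u‖₊ : ENNReal) := by
        show (⨆ k ∈ spectrum ℂ (((‖u * u‖ : ℝ) : ℂ) • (1 : A) - u * u), (‖k‖₊ : ENNReal))
          ≤ (‖u * u‖₊ : ENNReal)
        refine iSup₂_le fun k hk => ?_
        exact_mod_cast hspec k hk
      rw [husa.spectralRadius_eq_nnnorm] at hrad
      exact_mod_cast hrad
  obtain ⟨hαnorm, hest⟩ := hK
  have hαcont : Continuous α := by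
    have hiso : Isometry α := by
      refine Isometry.of_dist_eq fun x y => ?_
      rw [dist_eq_norm, dist_eq_norm, ← hsub, hαnorm]
    exact hiso.continuous
  -- the even part as a closed subalgebra
  let B : Subalgebra ℂ A :=
    { carrier := {x : A | α x = x}
      mul_mem' := fun {a b} ha hb => hevenmul a b ha hb
      one_mem' := hα1
      add_mem' := fun {a b} ha hb => by
        show α (a + b) = a + b
        rw [hadd, ha, hb]
      zero_mem' := hα0
      algebraMap_mem' := fun r => by
        show α (algebraMap ℂ A r) = algebraMap ℂ A r
        rw [Algebra.algebraMap_eq_smul_one, hsmul, hα1] }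
  have hBmem : ∀ x : A, x ∈ B ↔ α x = x := fun x => Iff.rfl
  have hBclosed : IsClosed (B : Set A) := isClosed_eq hαcont continuous_id
  letI : CompleteSpace B := hBclosed.completeSpace_coe
  letI : NormOneClass B := ⟨show ‖((1 : B) : A)‖ = 1 from hn1⟩
  let φ : B →ₐ[ℂ] ℂ :=
    { toFun := fun b => w₀ (b : A)
      map_one' := h₀one
      map_mul' := fun x y => h₀mul x y x.2 y.2
      map_zero' := hw₀0
      map_add' := fun x y => h₀add x y x.2 y.2
      commutes' := fun r => by
        show w₀ (algebraMap ℂ A r) = r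
        rw [Algebra.algebraMap_eq_smul_one, h₀smul r 1 hα1, h₀one, mul_one] }
  have hφcont : Continuous fun b : B => w₀ (b : A) := map_continuous φ
  have hφbound : ∀ b : B, ‖w₀ (b : A)‖ ≤ ‖(b : A)‖ := fun b =>
    AlgHom.norm_apply_le_self φ b
  -- existence of an odd anti-selfadjoint element not annihilated by w₀ ∘ square
  have hexv : ∃ v : A, α v = -v ∧ star v = -v ∧ w₀ (v * v) ≠ 0 := by
    by_contra hcon
    push_neg at hcon
    have hpq : ∀ p q : A, α p = -p → star p = -p → α q = -q → star q = -q →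
        w₀ (p * q) = 0 := by
      intro p q hp hsp hq hsq
      have hsum : α (p + q) = -(p + q) := by rw [hadd, hp, hq, neg_add]
      have hssum : star (p + q) = -(p + q) := by rw [star_add, hsp, hsq, neg_add]
      have hpqe := hcon (p + q) hsum hssum
      have hpp := hcon p hp hsp
      have hqq := hcon q hq hsq
      have hexp : (p + q) * (p + q) = p * p + (p * q + (p * q + q * q)) := by
        letI : CommRing A := { (inferInstance : Ring A) with mul_comm := hcomm }
        ring
      have e1 : α (p * p) = p * p := hoddmul p p hp hp
      have e2 : α (p * q) = p * q := hoddmul p q hp hq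
      have e3 : α (q * q) = q * q := hoddmul q q hq hq
      have e4 : α (p * q + q * q) = p * q + q * q := by rw [hadd, e2, e3]
      have e5 : α (p * q + (p * q + q * q)) = p * q + (p * q + q * q) := by
        rw [hadd, e2, e4]
      have := hpqe
      rw [hexp, h₀add _ _ e1 e5, h₀add _ _ e2 e4, h₀add _ _ e2 e3, hpp, hqq] at this
      -- this : 0 + (w₀ (p*q) + (w₀ (p*q) + 0)) = 0
      have h2 : (2 : ℂ) * w₀ (p * q) = 0 := by linear_combination this
      have := mul_eq_zero.mp h2
      simpa using this
    have hgen : ∀ x y : A, α x = -x → α y = -y → w₀ (x * y) = 0 := by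
      intro x y hx hy
      have hxparts : ∀ z : A, α z = -z →
          ∃ z₁ z₂ : A, α z₁ = -z₁ ∧ star z₁ = -z₁ ∧ α z₂ = -z₂ ∧ star z₂ = -z₂ ∧
            z = z₁ + Complex.I • z₂ := by
        intro z hz
        refine ⟨(2⁻¹ : ℂ) • (z - star z), (-(2⁻¹) * Complex.I : ℂ) • (z + star z),
          ?_, ?_, ?_, ?_, ?_⟩
        · rw [hsmul, hsub, hz, hstar, hz, star_neg]
          module
        · rw [star_smul, star_sub, star_star]
          have : star (2⁻¹ : ℂ) = (2⁻¹ : ℂ) := by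
            simp [Complex.star_def]
          rw [this]
          module
        · rw [hsmul, hadd, hz, hstar, hz, star_neg]
          module
        · rw [star_smul, star_add, star_star]
          have hc : star (-(2⁻¹) * Complex.I : ℂ) = -(-(2⁻¹) * Complex.I) := by
            simp [Complex.star_def]
          rw [hc]
          module
        · have hI : (Complex.I * (-(2⁻¹) * Complex.I) : ℂ) = 2⁻¹ := by
            have h := Complex.I_mul_I
            linear_combination (-(2⁻¹) : ℂ) * h
          rw [smul_smul, hI]
          module
      obtain ⟨x₁, x₂, hx₁, hsx₁, hx₂, hsx₂, hxdec⟩ := hxparts x hx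
      obtain ⟨y₁, y₂, hy₁, hsy₁, hy₂, hsy₂, hydec⟩ := hxparts y hy
      have hII : ∀ a b : A, (Complex.I • a) * (Complex.I • b) = -(a * b) := by
        intro a b
        rw [smul_mul_assoc, mul_smul_comm, smul_smul, Complex.I_mul_I, neg_one_smul]
      have hprod : x * y = x₁ * y₁ + (Complex.I • (x₁ * y₂) +
          (Complex.I • (x₂ * y₁) - x₂ * y₂)) := by
        rw [hxdec, hydec, add_mul, mul_add, mul_add, hII, mul_smul_comm, smul_mul_assoc]
        abel
      have o11 : α (x₁ * y₁) = x₁ * y₁ := hoddmul _ _ hx₁ hy₁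
      have o12 : α (x₁ * y₂) = x₁ * y₂ := hoddmul _ _ hx₁ hy₂
      have o21 : α (x₂ * y₁) = x₂ * y₁ := hoddmul _ _ hx₂ hy₁
      have o22 : α (x₂ * y₂) = x₂ * y₂ := hoddmul _ _ hx₂ hy₂
      have s12 : α (Complex.I • (x₁ * y₂)) = Complex.I • (x₁ * y₂) := by
        rw [hsmul, o12]
      have s21 : α (Complex.I • (x₂ * y₁)) = Complex.I • (x₂ * y₁) := by
        rw [hsmul, o21]
      have s21' : α (Complex.I • (x₂ * y₁) - x₂ * y₂) = Complex.I • (x₂ * y₁) - x₂ * y₂ := by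
        rw [hsub, s21, o22]
      have srest : α (Complex.I • (x₁ * y₂) + (Complex.I • (x₂ * y₁) - x₂ * y₂))
          = Complex.I • (x₁ * y₂) + (Complex.I • (x₂ * y₁) - x₂ * y₂) := by
        rw [hadd, s12, s21']
      rw [hprod, h₀add _ _ o11 srest, h₀add _ _ s12 s21']
      have hsubw : w₀ (Complex.I • (x₂ * y₁) - x₂ * y₂)
          = Complex.I * w₀ (x₂ * y₁) - w₀ (x₂ * y₂) := by
        rw [sub_eq_add_neg, h₀add _ _ s21 (by rw [hneg, o22]),
          h₀smul _ _ o21, hw₀neg _ o22, ← sub_eq_add_neg]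
      rw [hsubw, h₀smul _ _ o12,
        hpq _ _ hx₁ hsx₁ hy₁ hsy₁, hpq _ _ hx₁ hsx₁ hy₂ hsy₂,
        hpq _ _ hx₂ hsx₂ hy₁ hsy₁, hpq _ _ hx₂ hsx₂ hy₂ hsy₂]
      ring
    -- now w₀ vanishes on the closure of the span, which contains 1
    have hT : ∃ T : Submodule ℂ A, (T : Set A) = {z : A | α z = z ∧ w₀ z = 0} := by
      refine ⟨{ carrier := {z : A | α z = z ∧ w₀ z = 0}
                add_mem' := ?_
                zero_mem' := ⟨hα0, hw₀0⟩
                smul_mem' := ?_ }, rfl⟩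
      · intro a b ha hb
        obtain ⟨ha1, ha2⟩ := ha
        obtain ⟨hb1, hb2⟩ := hb
        exact ⟨by rw [hadd, ha1, hb1], by rw [h₀add _ _ ha1 hb1, ha2, hb2, add_zero]⟩
      · intro c a ha
        obtain ⟨ha1, ha2⟩ := ha
        exact ⟨by rw [hsmul, ha1], by rw [h₀smul _ _ ha1, ha2, mul_zero]⟩
    obtain ⟨T, hTcar⟩ := hT
    have hTclosed : IsClosed (T : Set A) := by
      rw [hTcar]
      have : {z : A | α z = z ∧ w₀ z = 0}
          = Subtype.val '' {b : B | w₀ (b : A) = 0} := by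
        ext z
        constructor
        · rintro ⟨h1, h2⟩
          exact ⟨⟨z, h1⟩, h2, rfl⟩
        · rintro ⟨b, hb, rfl⟩
          exact ⟨b.2, hb⟩
      rw [this]
      exact hBclosed.isClosedEmbedding_subtypeVal.isClosedMap _
        (isClosed_eq hφcont continuous_const)
    have hspan : Submodule.span ℂ
        {z : A | ∃ x y, α x = -x ∧ α y = -y ∧ z = x * y} ≤ T := by
      rw [Submodule.span_le]
      rintro z ⟨x, y, hx, hy, rfl⟩
      show x * y ∈ (T : Set A)
      rw [hTcar]
      exact ⟨hoddmul _ _ hx hy, hgen _ _ hx hy⟩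
    have hclos : closure ((Submodule.span ℂ
        {z : A | ∃ x y, α x = -x ∧ α y = -y ∧ z = x * y} : Submodule ℂ A) : Set A)
        ⊆ (T : Set A) :=
      closure_minimal (fun z hz => hspan hz) hTclosed
    rw [Imprimitive] at himp
    rw [himp] at hclos
    have h1T : (1 : A) ∈ (T : Set A) := hclos hα1
    rw [hTcar] at h1T
    exact one_ne_zero (h1T.2 ▸ h₀one.symm)
  obtain ⟨v, hvodd, hvstar, hvne⟩ := hexv
  have hvve : α (v * v) = v * v := hoddmul v v hvodd hvodd
  have hvvsa : star (v * v) = v * v := by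
    rw [star_mul, hvstar, neg_mul_neg, hcomm]
  have hreal : (w₀ (v * v)).im = 0 := by
    have h := h₀star (v * v) hvve
    rw [hvvsa] at h
    exact Complex.conj_eq_iff_im.mp h.symm
  have hwvv : w₀ (v * v) = (((w₀ (v * v)).re : ℝ) : ℂ) := by
    apply Complex.ext <;> simp [hreal]
  have humem : α (((‖v * v‖ : ℝ) : ℂ) • (1 : A) - v * v)
      = ((‖v * v‖ : ℝ) : ℂ) • (1 : A) - v * v := by
    rw [hsub, hsmul, hα1, hvve]
  have hw₀u : w₀ (((‖v * v‖ : ℝ) : ℂ) • (1 : A) - v * v)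
      = ((‖v * v‖ : ℝ) : ℂ) - w₀ (v * v) := by
    rw [sub_eq_add_neg, h₀add _ _ (by rw [hsmul, hα1]) (by rw [hneg, hvve]),
      h₀smul _ _ hα1, h₀one, mul_one, hw₀neg _ hvve, ← sub_eq_add_neg]
  have hrpos : 0 < (w₀ (v * v)).re := by
    have hb := hφbound ⟨_, humem⟩
    rw [hw₀u] at hb
    have hb2 : ‖((‖v * v‖ : ℝ) : ℂ) - w₀ (v * v)‖ ≤ ‖v * v‖ := by
      refine le_trans hb ?_
      exact hest v (by rw [hvstar, hneg, hvodd, neg_neg])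
    rw [hwvv] at hb2
    have hcast : ((‖v * v‖ : ℝ) : ℂ) - (((w₀ (v * v)).re : ℝ) : ℂ)
        = ((‖v * v‖ - (w₀ (v * v)).re : ℝ) : ℂ) := by push_cast; ring
    rw [hcast, Complex.norm_real, Real.norm_eq_abs] at hb2
    have habs := abs_le.mp hb2
    have hne : (w₀ (v * v)).re ≠ 0 := by
      intro h
      apply hvne
      rw [hwvv, h]
      simp
    rcases lt_or_gt_of_ne hne with h | h
    · exfalso; linarith [habs.2]
    · exact h
  set r : ℝ := (w₀ (v * v)).re with hrdef
  set c : ℝ := Real.sqrt r with hcdef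
  have hcpos : 0 < c := Real.sqrt_pos.mpr hrpos
  have hcc : ((c : ℝ) : ℂ) * ((c : ℝ) : ℂ) = w₀ (v * v) := by
    rw [hwvv]
    have h : (c * c : ℝ) = r := Real.mul_self_sqrt hrpos.le
    rw [← h]
    push_cast
    ring
  have hcne : ((c : ℝ) : ℂ) ≠ 0 := by
    simpa using hcpos.ne'
  have hcstar : starRingEnd ℂ ((c : ℝ) : ℂ) = ((c : ℝ) : ℂ) := Complex.conj_ofReal c
  -- abbreviation lemmas
  have hconj2 : star (2⁻¹ : ℂ) = (2⁻¹ : ℂ) := by simp [Complex.star_def]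
  have hPe : ∀ x : A, α ((2⁻¹ : ℂ) • (x + α x)) = (2⁻¹ : ℂ) • (x + α x) := by
    intro x; rw [hsmul, hadd, hinvol, add_comm]
  have hQo : ∀ x : A, α ((2⁻¹ : ℂ) • (x - α x)) = -((2⁻¹ : ℂ) • (x - α x)) := by
    intro x; rw [hsmul, hsub, hinvol]; module
  have hQve : ∀ x : A, α ((2⁻¹ : ℂ) • (x - α x) * v) = (2⁻¹ : ℂ) • (x - α x) * v :=
    fun x => hoddmul _ v (hQo x) hvodd
  have hassoc1 : ∀ a b : A, (a * b) * v = a * (b * v) := fun a b => mul_assoc a b v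
  have hassoc2 : ∀ a b : A, (a * b) * v = (a * v) * b := by
    intro a b
    letI : CommRing A := { (inferInstance : Ring A) with mul_comm := hcomm }
    ring
  have hprod2 : ∀ a b : A, (a * v) * (b * v) = (a * b) * (v * v) := by
    intro a b
    letI : CommRing A := { (inferInstance : Ring A) with mul_comm := hcomm }
    ring
  have hkey : ∀ a b : A, α a = -a → α b = -b →
      w₀ (a * v) * w₀ (b * v) = w₀ (v * v) * w₀ (a * b) := by
    intro a b ha hb
    rw [← h₀mul _ _ (hoddmul _ _ ha hvodd) (hoddmul _ _ hb hvodd), hprod2,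
      h₀mul _ _ (hoddmul a b ha hb) hvve, mul_comm]
  -- scalar component lemmas
  have Lpadd : ∀ x y : A, w₀ ((2⁻¹ : ℂ) • (x + y + α (x + y)))
      = w₀ ((2⁻¹ : ℂ) • (x + α x)) + w₀ ((2⁻¹ : ℂ) • (y + α y)) := by
    intro x y
    have e : (2⁻¹ : ℂ) • (x + y + α (x + y))
        = (2⁻¹ : ℂ) • (x + α x) + (2⁻¹ : ℂ) • (y + α y) := by
      rw [hadd]; module
    rw [e, h₀add _ _ (hPe x) (hPe y)]
  have Lqadd : ∀ x y : A, w₀ ((2⁻¹ : ℂ) • (x + y - α (x + y)) * v) / ((c : ℝ) : ℂ)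
      = w₀ ((2⁻¹ : ℂ) • (x - α x) * v) / ((c : ℝ) : ℂ)
        + w₀ ((2⁻¹ : ℂ) • (y - α y) * v) / ((c : ℝ) : ℂ) := by
    intro x y
    have e : (2⁻¹ : ℂ) • (x + y - α (x + y)) * v
        = (2⁻¹ : ℂ) • (x - α x) * v + (2⁻¹ : ℂ) • (y - α y) * v := by
      rw [hadd, ← add_mul]
      congr 1
      module
    rw [e, h₀add _ _ (hQve x) (hQve y), add_div]
  have Lpsmul : ∀ (s : ℂ) (x : A), w₀ ((2⁻¹ : ℂ) • (s • x + α (s • x)))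
      = s * w₀ ((2⁻¹ : ℂ) • (x + α x)) := by
    intro s x
    have e : (2⁻¹ : ℂ) • (s • x + α (s • x)) = s • ((2⁻¹ : ℂ) • (x + α x)) := by
      rw [hsmul]; module
    rw [e, h₀smul _ _ (hPe x)]
  have Lqsmul : ∀ (s : ℂ) (x : A), w₀ ((2⁻¹ : ℂ) • (s • x - α (s • x)) * v) / ((c : ℝ) : ℂ)
      = s * (w₀ ((2⁻¹ : ℂ) • (x - α x) * v) / ((c : ℝ) : ℂ)) := by
    intro s x
    have e : (2⁻¹ : ℂ) • (s • x - α (s • x)) * v = s • ((2⁻¹ : ℂ) • (x - α x) * v) := by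
      rw [hsmul, ← smul_mul_assoc]
      congr 1
      module
    rw [e, h₀smul _ _ (hQve x), mul_div_assoc]
  have Lpone : w₀ ((2⁻¹ : ℂ) • ((1 : A) + α 1)) = 1 := by
    have e : (2⁻¹ : ℂ) • ((1 : A) + α 1) = 1 := by rw [hα1]; module
    rw [e, h₀one]
  have Lqone : w₀ ((2⁻¹ : ℂ) • ((1 : A) - α 1) * v) / ((c : ℝ) : ℂ) = 0 := by
    rw [hα1, sub_self, smul_zero, zero_mul, hw₀0, zero_div]
  have Lpmul : ∀ x y : A, w₀ ((2⁻¹ : ℂ) • (x * y + α (x * y)))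
      = w₀ ((2⁻¹ : ℂ) • (x + α x)) * w₀ ((2⁻¹ : ℂ) • (y + α y))
        + (w₀ ((2⁻¹ : ℂ) • (x - α x) * v) / ((c : ℝ) : ℂ))
          * (w₀ ((2⁻¹ : ℂ) • (y - α y) * v) / ((c : ℝ) : ℂ)) := by
    intro x y
    have E1 : (2⁻¹ : ℂ) • (x * y + α (x * y))
        = ((2⁻¹ : ℂ) • (x + α x)) * ((2⁻¹ : ℂ) • (y + α y))
          + ((2⁻¹ : ℂ) • (x - α x)) * ((2⁻¹ : ℂ) • (y - α y)) := by
      rw [hmul]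
      simp only [smul_mul_assoc, mul_smul_comm, smul_smul, add_mul, mul_add,
        sub_mul, mul_sub, smul_add, smul_sub]
      module
    rw [E1, h₀add _ _ (hevenmul _ _ (hPe x) (hPe y)) (hoddmul _ _ (hQo x) (hQo y)),
      h₀mul _ _ (hPe x) (hPe y)]
    congr 1
    have hq : (w₀ ((2⁻¹ : ℂ) • (x - α x) * v) / ((c : ℝ) : ℂ))
        * (w₀ ((2⁻¹ : ℂ) • (y - α y) * v) / ((c : ℝ) : ℂ))
        = (w₀ ((2⁻¹ : ℂ) • (x - α x) * v) * w₀ ((2⁻¹ : ℂ) • (y - α y) * v))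
          / (((c : ℝ) : ℂ) * ((c : ℝ) : ℂ)) := by
      rw [div_mul_div_comm]
    rw [hq, hkey _ _ (hQo x) (hQo y), hcc, mul_div_cancel_left₀]
    rw [← hcc]
    exact mul_ne_zero hcne hcne
  have Lqmul : ∀ x y : A, w₀ ((2⁻¹ : ℂ) • (x * y - α (x * y)) * v) / ((c : ℝ) : ℂ)
      = w₀ ((2⁻¹ : ℂ) • (x + α x)) * (w₀ ((2⁻¹ : ℂ) • (y - α y) * v) / ((c : ℝ) : ℂ))
        + (w₀ ((2⁻¹ : ℂ) • (x - α x) * v) / ((c : ℝ) : ℂ))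
          * w₀ ((2⁻¹ : ℂ) • (y + α y)) := by
    intro x y
    have E2 : (2⁻¹ : ℂ) • (x * y - α (x * y)) * v
        = ((2⁻¹ : ℂ) • (x + α x)) * ((2⁻¹ : ℂ) • (y - α y) * v)
          + ((2⁻¹ : ℂ) • (x - α x) * v) * ((2⁻¹ : ℂ) • (y + α y)) := by
      rw [hmul, ← hassoc1, ← hassoc2, ← add_mul]
      congr 1
      simp only [smul_mul_assoc, mul_smul_comm, smul_smul, add_mul, mul_add,
        sub_mul, mul_sub, smul_add, smul_sub]
      module
    rw [E2, h₀add _ _ (hevenmul _ _ (hPe x) (hQve y)) (hevenmul _ _ (hQve x) (hPe y)),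
      h₀mul _ _ (hPe x) (hQve y), h₀mul _ _ (hQve x) (hPe y), add_div,
      mul_div_assoc, mul_div_right_comm]
  have Lpstar : ∀ x : A, w₀ ((2⁻¹ : ℂ) • (star x + α (star x)))
      = starRingEnd ℂ (w₀ ((2⁻¹ : ℂ) • (x + α x))) := by
    intro x
    have e : (2⁻¹ : ℂ) • (star x + α (star x)) = star ((2⁻¹ : ℂ) • (x + α x)) := by
      rw [hstar, star_smul, star_add, hconj2]
    rw [e, h₀star _ (hPe x)]
  have Lqstar : ∀ x : A, w₀ ((2⁻¹ : ℂ) • (star x - α (star x)) * v) / ((c : ℝ) : ℂ)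
      = -starRingEnd ℂ (w₀ ((2⁻¹ : ℂ) • (x - α x) * v) / ((c : ℝ) : ℂ)) := by
    intro x
    have e1 : (2⁻¹ : ℂ) • (star x - α (star x)) = star ((2⁻¹ : ℂ) • (x - α x)) := by
      rw [hstar, star_smul, star_sub, hconj2]
    have e2 : star ((2⁻¹ : ℂ) • (x - α x)) * v
        = -star ((2⁻¹ : ℂ) • (x - α x) * v) := by
      rw [star_mul, hvstar]
      letI : CommRing A := { (inferInstance : Ring A) with mul_comm := hcomm }
      ring
    rw [e1, e2, hw₀neg _ (hstareven _ (hQve x)), h₀star _ (hQve x), neg_div,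
      map_div₀, hcstar]
  have Lpalpha : ∀ x : A, w₀ ((2⁻¹ : ℂ) • (α x + α (α x)))
      = w₀ ((2⁻¹ : ℂ) • (x + α x)) := by
    intro x; rw [hinvol, add_comm]
  have Lqalpha : ∀ x : A, w₀ ((2⁻¹ : ℂ) • (α x - α (α x)) * v) / ((c : ℝ) : ℂ)
      = -(w₀ ((2⁻¹ : ℂ) • (x - α x) * v) / ((c : ℝ) : ℂ)) := by
    intro x
    have e : (2⁻¹ : ℂ) • (α x - α (α x)) * v = -((2⁻¹ : ℂ) • (x - α x) * v) := by
      rw [hinvol, ← neg_mul]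
      congr 1
      module
    rw [e, hw₀neg _ (hQve x), neg_div]
  refine ⟨fun x => !![w₀ ((2⁻¹ : ℂ) • (x + α x)),
      w₀ ((2⁻¹ : ℂ) • (x - α x) * v) / ((c : ℝ) : ℂ);
      w₀ ((2⁻¹ : ℂ) • (x - α x) * v) / ((c : ℝ) : ℂ),
      w₀ ((2⁻¹ : ℂ) • (x + α x))],
    ⟨?_, ?_, ?_, ?_, ?_, ?_, ?_⟩, ?_⟩
  · -- Kmem
    intro x
    constructor <;> simp [Kmem]
  · -- additive
    intro x y
    show !![_, _; _, _] = _
    rw [Lpadd x y, Lqadd x y]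
    ext i j
    fin_cases i <;> fin_cases j <;> simp [Matrix.add_apply]
  · -- smul
    intro s x
    show !![_, _; _, _] = _
    rw [Lpsmul s x, Lqsmul s x]
    ext i j
    fin_cases i <;> fin_cases j <;> simp [Matrix.smul_apply, smul_eq_mul]
  · -- multiplicative
    intro x y
    show !![_, _; _, _] = _
    rw [Lpmul x y, Lqmul x y]
    ext i j
    fin_cases i <;> fin_cases j <;>
      simp [Matrix.mul_apply, Fin.sum_univ_two] <;> ring
  · -- unital
    show !![_, _; _, _] = _
    rw [Lpone, Lqone]
    ext i j
    fin_cases i <;> fin_cases j <;> simp [Matrix.one_apply]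
  · -- star
    intro x
    show !![_, _; _, _] = _
    rw [Lpstar x, Lqstar x]
    ext i j
    fin_cases i <;> fin_cases j <;> simp [Kst]
  · -- alpha
    intro x
    show !![_, _; _, _] = _
    rw [Lpalpha x, Lqalpha x]
    ext i j
    fin_cases i <;> fin_cases j <;> simp [Kgamma]
  · -- extension
    intro a ha
    have e1 : w₀ ((2⁻¹ : ℂ) • (a + α a)) = w₀ a := by
      have e : (2⁻¹ : ℂ) • (a + α a) = a := by rw [ha]; module
      rw [e]
    have e2 : w₀ ((2⁻¹ : ℂ) • (a - α a) * v) / ((c : ℝ) : ℂ) = 0 := by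
      rw [ha, sub_self, smul_zero, zero_mul, hw₀0, zero_div]
    show !![_, _; _, _] = _
    rw [e1, e2]
    ext i j
    fin_cases i <;> fin_cases j <;> simp [Matrix.smul_apply, Matrix.one_apply]
end
end

section
/- Let (A, α) be a unital commutative imprimitive Kreĭn C*-algebra with fundamental symmetry α and let ε be an odd symmetry compatible with α. Then a character w on (A, α) is even if and only if γ ∘ w is not even; consequently, in each pair {w, γ ∘ w} of characters there is exactly one even character. -/
noncomputable section

/-- A character `w` is even (w.r.t. the odd symmetry `ε`) if `ε_𝕂 ∘ w ∘ ε = w`. -/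
def IsEven {A : Type*} (ε : A → A) (w : A → Matrix (Fin 2) (Fin 2) ℂ) : Prop :=
  ∀ x, Keps (w (ε x)) = w x

/-- For a unital commutative imprimitive Kreĭn C*-algebra with a compatible
odd symmetry `ε`, a character `w` is even iff `γ ∘ w` is not even; hence each pair
`{w, γ ∘ w}` contains exactly one even character. -/
theorem krein_exactly_one_even_character {A : Type*} [NormedRing A] [NormedAlgebra ℂ A]
    [StarRing A] [StarModule ℂ A] [CompleteSpace A]
(α : A → A)
    (hadd : ∀ x y : A, α (x + y) = α x + α y)
    (hsmul : ∀ (c : ℂ) (x : A), α (c • x) = c • α x)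
    (hmul : ∀ x y : A, α (x * y) = α x * α y)
    (hstar : ∀ x : A, α (star x) = star (α x))
    (hinvol : ∀ x : A, α (α x) = x)
    (hfs : ∀ x : A, ‖α (star x) * x‖ = ‖x‖ ^ 2)
    (hcomm : ∀ x y : A, x * y = y * x)
    (himp : Imprimitive α)
(ε : A → A)
    (headd : ∀ x y : A, ε (x + y) = ε x + ε y)
    (hesmul : ∀ (c : ℂ) (x : A), ε (c • x) = c • ε x)
    (heinvol : ∀ x : A, ε (ε x) = x)
    (hestar : ∀ x : A, ε (star x) = -star (ε x))
    (hemul_l : ∀ x y : A, ε (x * y) = ε x * y)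
    (hemul_r : ∀ x y : A, ε (x * y) = x * ε y)
    (hecompat : ∀ x : A, ε (α x) = -α (ε x))
    (w : A → Matrix (Fin 2) (Fin 2) ℂ) (hw : IsKChar α w) :
    IsEven ε w ↔ ¬ IsEven ε (fun x => Kgamma (w x)) := by
  obtain ⟨hmem, wadd, wsmul, wmul, wone, wstar, walpha⟩ := hw
  -- basic facts about e := ε 1
  set e := ε 1 with he
  have heq : ∀ x : A, ε x = x * e := by
    intro x
    conv_lhs => rw [← mul_one x]
    exact hemul_r x 1
  have hee : e * e = 1 := by
    have h1 : ε e = e * e := by rw [heq]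
    have h2 : ε e = 1 := heinvol 1
    rw [h1] at h2; exact h2
  have halpha1 : α (1 : A) = 1 := by
    have h : ∀ x : A, α 1 * x = x := by
      intro x
      calc α 1 * x = α 1 * α (α x) := by rw [hinvol]
        _ = α (1 * α x) := (hmul 1 (α x)).symm
        _ = α (α x) := by rw [one_mul]
        _ = x := hinvol x
    simpa using h 1
  have halphae : α e = -e := by
    have h := hecompat 1
    rw [halpha1] at h
    -- h : ε 1 = -α (ε 1)
    have := congrArg Neg.neg h
    simp only [neg_neg] at this
    exact this.symm
  -- matrix facts about E := w e
  set E := w e with hE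
  have wneg : ∀ x : A, w (-x) = -w x := by
    intro x
    have := wsmul (-1) x
    simpa [neg_one_smul] using this
  have hEneg : Kgamma E = -E := by
    have h1 : w (α e) = Kgamma E := walpha e
    rw [halphae, wneg] at h1
    exact h1.symm
  have hE00 : E 0 0 = 0 := by
    have h := congrFun (congrFun hEneg 0) 0
    simp only [Kgamma, Matrix.of_apply, if_true, Matrix.neg_apply, eq_self_iff_true] at h
    linear_combination h / 2
  have hE11 : E 1 1 = 0 := by
    have h := (hmem e).1
    rw [← hE] at h
    rw [← h]; exact hE00
  have hE10 : E 1 0 = E 0 1 := by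
    have h := (hmem e).2
    rw [← hE] at h
    exact h.symm
  have hEE : E * E = 1 := by rw [hE, ← wmul, hee, wone]
  have hb2 : E 0 1 * E 0 1 = 1 := by
    have h := congrFun (congrFun hEE 0) 0
    rw [Matrix.mul_apply, Fin.sum_univ_two] at h
    rw [hE00, hE10] at h
    simpa using h
  -- the key computation : Keps (M * E) = (E 0 1) • M
  have hkey : ∀ M : Matrix (Fin 2) (Fin 2) ℂ, Keps (M * E) = E 0 1 • M := by
    intro M
    ext i j
    fin_cases j <;>
      simp [Keps, Matrix.mul_apply, Fin.sum_univ_two, hE00, hE11, hE10,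
        Matrix.smul_apply, mul_comm, smul_eq_mul]
  have hwe : ∀ x : A, w (ε x) = w x * E := by
    intro x; rw [heq, wmul]
  have hcond : ∀ x : A, Keps (w (ε x)) = E 0 1 • w x := by
    intro x; rw [hwe, hkey]
  -- w even iff b = 1
  have heven : IsEven ε w ↔ E 0 1 = 1 := by
    constructor
    · intro h
      have h1 := h 1
      rw [hcond, wone] at h1
      have := congrFun (congrFun h1 0) 0
      simpa using this
    · intro hb x
      rw [hcond, hb, one_smul]
  -- Keps of a negation
  have hkneg : ∀ M : Matrix (Fin 2) (Fin 2) ℂ, Keps (-M) = -Keps M := by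
    intro M; ext i j; simp [Keps]
  have halphaeps : ∀ x : A, α (ε x) = -ε (α x) := by
    intro x
    have h := hecompat x
    have := congrArg Neg.neg h
    simp only [neg_neg] at this
    exact this.symm
  have hgcond : ∀ x : A, Keps (Kgamma (w (ε x))) = -(E 0 1 • Kgamma (w x)) := by
    intro x
    have h1 : Kgamma (w (ε x)) = -(Kgamma (w x) * E) := by
      rw [← walpha, halphaeps, wneg, heq, wmul, walpha]
    rw [h1, hkneg, hkey]
  have hKgone : Kgamma (1 : Matrix (Fin 2) (Fin 2) ℂ) = 1 := by
    ext i j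
    by_cases hij : i = j <;> simp [Kgamma, hij, Matrix.one_apply]
  have hgeven : IsEven ε (fun x => Kgamma (w x)) ↔ E 0 1 = -1 := by
    constructor
    · intro h
      have h1 := h 1
      simp only [hgcond, wone, hKgone] at h1
      have h2 := congrFun (congrFun h1 0) 0
      simp only [Matrix.neg_apply, Matrix.smul_apply, Matrix.one_apply_eq, smul_eq_mul,
        mul_one] at h2
      linear_combination -h2
    · intro hb x
      simp only [hgcond, hb, neg_smul, neg_neg, one_smul]
  rw [heven, hgeven]
  rcases mul_self_eq_one_iff.mp hb2 with h | h <;> rw [h] <;> norm_num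
end
end
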